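/- arXiv:1302.4804 — 4 statements merged into one kernel-verified Lean document; each statement's English description precedes it below -/
import Mathlib

section
/- A net of quadrics Λ in the variables a,b,c,d,e is ρ1-unstable, where ρ1=(1,1,1,1,-4), if and only if at least one of the following holds: (a) the subspace of Λ consisting of forms divisible by e has dimension at least 2 (a pencil of Λ contains the hyperplane e=0); or (b) e² ∈ Λ (an element of the net is singular along the hyperplane e=0). -/
open MvPolynomial

/-- The space of polynomials in the five variables `a,b,c,d,e` (indexed `0,…,4`). -/
abbrev Quin : Type := MvPolynomial (Fin 5) ℂ

/-- `m` is (the exponent vector of) a quadratic monomial. -/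
def QuadMon (m : Fin 5 →₀ ℕ) : Prop := (m.sum fun _ n => n) = 2

/-- A net of quadrics: a 3-dimensional space of quadratic forms. -/
def IsNet (Λ : Submodule ℂ Quin) : Prop :=
  Module.finrank ℂ Λ = 3 ∧ ∀ Q ∈ Λ, MvPolynomial.IsHomogeneous Q 2

/-- The `ρ`-weight of a monomial. -/
def wt (ρ : Fin 5 → ℤ) (m : Fin 5 →₀ ℕ) : ℤ := ∑ i, (m i : ℤ) * ρ i

/-- `Λ` is semistable with respect to the weight vector `ρ`: there are three distinct
quadratic monomials with total `ρ`-weight `≥ 0` such that the corresponding coefficient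
map `Λ → ℂ³` is bijective. -/
def SemistableWrt (Λ : Submodule ℂ Quin) (ρ : Fin 5 → ℤ) : Prop :=
  ∃ m1 m2 m3 : Fin 5 →₀ ℕ, m1 ≠ m2 ∧ m1 ≠ m3 ∧ m2 ≠ m3 ∧
    QuadMon m1 ∧ QuadMon m2 ∧ QuadMon m3 ∧
    0 ≤ wt ρ m1 + wt ρ m2 + wt ρ m3 ∧
    Function.Bijective (fun Q : Λ =>
      (![MvPolynomial.coeff m1 (Q : Quin), MvPolynomial.coeff m2 (Q : Quin),
         MvPolynomial.coeff m3 (Q : Quin)] : Fin 3 → ℂ))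

/-- The twelve distinguished weight vectors `ρ1,…,ρ12`. -/
def rho : Fin 12 → Fin 5 → ℤ :=
  ![![1,1,1,1,-4], ![2,2,2,-3,-3], ![3,3,-2,-2,-2], ![4,-1,-1,-1,-1],
    ![3,3,3,-2,-7], ![4,4,-1,-1,-6], ![9,4,-1,-6,-6], ![7,2,2,-3,-8],
    ![12,7,2,-8,-13], ![9,4,-1,-1,-11], ![14,4,-1,-6,-11], ![13,8,3,-7,-17]]

/-- A normalized weight vector: nonincreasing, sums to zero and not identically zero. -/
def IsNormalized (ρ : Fin 5 → ℤ) : Prop :=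
  (∀ i j : Fin 5, i ≤ j → ρ j ≤ ρ i) ∧ (∑ i, ρ i) = 0 ∧ ρ ≠ 0

/-- Linear substitution of variables by the matrix `g`, as a linear map on polynomials. -/
noncomputable def substMap (g : Matrix (Fin 5) (Fin 5) ℂ) : Quin →ₗ[ℂ] Quin :=
  (MvPolynomial.aeval fun i => ∑ j, MvPolynomial.C (g i j) * MvPolynomial.X j).toLinearMap

/-- Semistability of a net (Hilbert–Mumford criterion for `SL(5)`). -/
def Semistable (Λ : Submodule ℂ Quin) : Prop :=
  ∀ (g : Matrix.GeneralLinearGroup (Fin 5) ℂ) (ρ : Fin 5 → ℤ), IsNormalized ρ →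
    SemistableWrt (Submodule.map (substMap (g : Matrix (Fin 5) (Fin 5) ℂ)) Λ) ρ

/-- The symmetric matrix of a quadratic form. -/
noncomputable def quadMatrix (Q : Quin) : Matrix (Fin 5) (Fin 5) ℂ :=
  Matrix.of fun i j =>
    if i = j then MvPolynomial.coeff (Finsupp.single i 2) Q
    else (1/2) * MvPolynomial.coeff (Finsupp.single i 1 + Finsupp.single j 1) Q

/-- The discriminant quintic `det (x·A1 + y·A2 + z·A3)` of a net with basis `Q1,Q2,Q3`. -/
noncomputable def netDisc (Q1 Q2 Q3 : Quin) : MvPolynomial (Fin 3) ℂ :=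
  Matrix.det (Matrix.of fun i j : Fin 5 =>
    MvPolynomial.C (quadMatrix Q1 i j) * MvPolynomial.X 0 +
    MvPolynomial.C (quadMatrix Q2 i j) * MvPolynomial.X 1 +
    MvPolynomial.C (quadMatrix Q3 i j) * MvPolynomial.X 2)

/-- The net lies on a smooth quartic del Pezzo surface. -/
def OnSmoothDelPezzo (Λ : Submodule ℂ Quin) : Prop :=
  ∃ P1 P2 : Quin, P1 ∈ Λ ∧ P2 ∈ Λ ∧ LinearIndependent ℂ ![P1, P2] ∧
    ∀ v : Fin 5 → ℂ, v ≠ 0 → MvPolynomial.eval v P1 = 0 → MvPolynomial.eval v P2 = 0 →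
      LinearIndependent ℂ
        ![fun i => MvPolynomial.eval v (MvPolynomial.pderiv i P1),
          fun i => MvPolynomial.eval v (MvPolynomial.pderiv i P2)]

/-- The span of the quadratic monomials whose exponent vectors satisfy `P`. -/
noncomputable def monSpan (P : (Fin 5 →₀ ℕ) → Prop) : Submodule ℂ Quin :=
  Submodule.span ℂ {Q : Quin | ∃ m : Fin 5 →₀ ℕ, QuadMon m ∧ P m ∧ Q = MvPolynomial.monomial m 1}

/-! helpers -/

lemma quadMon_iff (m : Fin 5 →₀ ℕ) : QuadMon m ↔ m 0 + m 1 + m 2 + m 3 + m 4 = 2 := by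
  unfold QuadMon
  rw [Finsupp.sum_fintype _ _ (fun _ => rfl), Fin.sum_univ_five]

lemma quadMon_of_degree {m : Fin 5 →₀ ℕ} (h : m.degree = 2) : QuadMon m := by
  simpa [QuadMon, Finsupp.sum, Finsupp.degree_apply] using h

lemma wt_rho0 (m : Fin 5 →₀ ℕ) (hm : QuadMon m) : wt (rho 0) m = 2 - 5 * (m 4 : ℤ) := by
  rw [quadMon_iff] at hm
  unfold wt rho
  rw [Fin.sum_univ_five]
  simp only [Matrix.cons_val_zero, Matrix.cons_val_one, Matrix.head_cons,
    Matrix.cons_val_two, Matrix.tail_cons, Matrix.cons_val_three, Matrix.cons_val_four]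
  omega

lemma mem_monSpan_iff {P : (Fin 5 →₀ ℕ) → Prop} {Q : Quin} :
    Q ∈ monSpan P ↔ ∀ m, MvPolynomial.coeff m Q ≠ 0 → QuadMon m ∧ P m := by
  constructor
  · intro hQ
    let S : Submodule ℂ Quin :=
      { carrier := {Q | ∀ m, MvPolynomial.coeff m Q ≠ 0 → QuadMon m ∧ P m}
        zero_mem' := by intro m hm; simp at hm
        add_mem' := by
          intro a b ha hb m hm
          rw [coeff_add] at hm
          rcases (by by_contra hc; push_neg at hc; rw [hc.1, hc.2, add_zero] at hm; exact hm rfl :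
            coeff m a ≠ 0 ∨ coeff m b ≠ 0) with h | h
          exacts [ha m h, hb m h]
        smul_mem' := by
          intro c a ha m hm
          rw [coeff_smul] at hm
          exact ha m (right_ne_zero_of_mul hm) }
    have hle : monSpan P ≤ S := by
      apply Submodule.span_le.2
      rintro _ ⟨m, hq, hp, rfl⟩ m' hm'
      rw [coeff_monomial] at hm'
      rcases eq_or_ne m m' with rfl | hne
      · exact ⟨hq, hp⟩
      · simp [hne] at hm'
    exact hle hQ
  · intro h
    rw [Q.as_sum]
    apply Submodule.sum_mem
    intro m hm
    have hc : coeff m Q ≠ 0 := mem_support_iff.mp hm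
    have hQm : (monomial m) (coeff m Q) = coeff m Q • (monomial m 1 : Quin) := by
      simp [smul_monomial]
    rw [hQm]
    exact Submodule.smul_mem _ _ (Submodule.subset_span ⟨m, (h m hc).1, (h m hc).2, rfl⟩)

lemma exists_sep_coords {V : Type*} [AddCommGroup V] [Module ℂ V] {ι : Type*}
    (f : ι → (V →ₗ[ℂ] ℂ)) :
    ∀ (n : ℕ) (W : Submodule ℂ V), FiniteDimensional ℂ W → Module.finrank ℂ W = n →
      (∀ v ∈ W, (∀ i, f i v = 0) → v = 0) →
      ∃ g : Fin n → ι, Function.Injective g ∧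
        (∀ k, ∃ w ∈ W, f (g k) w ≠ 0) ∧
        (∀ v ∈ W, (∀ k, f (g k) v = 0) → v = 0) := by
  intro n
  induction n with
  | zero =>
    intro W hfd hrk _
    refine ⟨fun k => k.elim0, fun k => k.elim0, fun k => k.elim0, ?_⟩
    intro v hv _
    have : W = ⊥ := Submodule.finrank_eq_zero.mp hrk
    rw [this] at hv
    simpa using hv
  | succ n IH =>
    intro W hfd hrk hsep
    have hnt : Nontrivial W := Module.finrank_pos_iff (R := ℂ) |>.mp (by omega)
    obtain ⟨w0, hw0⟩ := exists_ne (0 : W)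
    have hw0V : (w0 : V) ≠ 0 := by
      simpa [Submodule.coe_eq_zero] using hw0
    have hex : ¬ ∀ i, f i (w0 : V) = 0 := fun h => hw0V (hsep _ w0.2 h)
    push_neg at hex
    obtain ⟨i0, hi0⟩ := hex
    set W' : Submodule ℂ V := W ⊓ LinearMap.ker (f i0) with hW'
    have hle : W' ≤ W := inf_le_left
    haveI : FiniteDimensional ℂ W' := Submodule.finiteDimensional_of_le hle
    have hker : LinearMap.ker ((f i0).domRestrict W) = Submodule.comap W.subtype W' := by
      ext x
      simp [hW', LinearMap.mem_ker, Submodule.mem_comap, x.2]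
    have hrange : Module.finrank ℂ (LinearMap.range ((f i0).domRestrict W)) = 1 := by
      have hne : LinearMap.range ((f i0).domRestrict W) ≠ ⊥ := by
        rw [Submodule.ne_bot_iff]
        exact ⟨f i0 (w0 : V), ⟨w0, rfl⟩, hi0⟩
      have h1 : Module.finrank ℂ (LinearMap.range ((f i0).domRestrict W)) ≤ 1 := by
        simpa using Submodule.finrank_le (LinearMap.range ((f i0).domRestrict W))
      have h0 : Module.finrank ℂ (LinearMap.range ((f i0).domRestrict W)) ≠ 0 := by
        intro h
        exact hne (Submodule.finrank_eq_zero.mp h)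
      omega
    have hrk' : Module.finrank ℂ W' = n := by
      have hrn := LinearMap.finrank_range_add_finrank_ker ((f i0).domRestrict W)
      rw [hrk, hrange, hker] at hrn
      have heq : Module.finrank ℂ (Submodule.comap W.subtype W') = Module.finrank ℂ W' :=
        (Submodule.comapSubtypeEquivOfLe hle).finrank_eq
      omega
    have hsep' : ∀ v ∈ W', (∀ i, f i v = 0) → v = 0 := fun v hv h => hsep v (hle hv) h
    obtain ⟨g', hg'inj, hg'ne, hg'sep⟩ := IH W' inferInstance hrk' hsep'
    refine ⟨Fin.cons i0 g', ?_, ?_, ?_⟩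
    · rw [Fin.cons_injective_iff]
      refine ⟨?_, hg'inj⟩
      rintro ⟨k, hk⟩
      obtain ⟨w, hwW', hwne⟩ := hg'ne k
      rw [hk] at hwne
      exact hwne (hwW'.2)
    · intro k
      refine Fin.cases ?_ ?_ k
      · exact ⟨(w0 : V), w0.2, by simpa using hi0⟩
      · intro k'
        obtain ⟨w, hwW', hwne⟩ := hg'ne k'
        exact ⟨w, hle hwW', by simpa using hwne⟩
    · intro v hv hall
      have hv0 : f i0 v = 0 := by simpa using hall 0
      have hvW' : v ∈ W' := ⟨hv, hv0⟩
      refine hg'sep v hvW' fun k => ?_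
      simpa using hall k.succ

/-- Construct semistability from a set `T` of admissible monomials separating `Λ`. -/
lemma semistable_of_sep (Λ : Submodule ℂ Quin) (h3 : Module.finrank ℂ Λ = 3)
    (T : Set (Fin 5 →₀ ℕ))
    (hq : ∀ m ∈ T, QuadMon m)
    (h4 : ∀ m ∈ T, m 4 ≤ 1)
    (hone : ∀ m ∈ T, ∀ m' ∈ T, m 4 ≠ 0 → m' 4 ≠ 0 → m = m')
    (hsep : ∀ Q ∈ Λ, (∀ m ∈ T, MvPolynomial.coeff m Q = 0) → Q = 0) :
    SemistableWrt Λ (rho 0) := by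
  haveI : FiniteDimensional ℂ Λ := FiniteDimensional.of_finrank_pos (by omega)
  obtain ⟨g, hginj, -, hgsep⟩ := exists_sep_coords
    (fun m : T => MvPolynomial.lcoeff ℂ (m : Fin 5 →₀ ℕ)) 3 Λ inferInstance h3
    (by
      intro v hv h
      exact hsep v hv fun m hm => h ⟨m, hm⟩)
  have hval : Function.Injective (fun k => ((g k : T) : Fin 5 →₀ ℕ)) :=
    Subtype.val_injective.comp hginj
  have hne : ∀ k k' : Fin 3, k ≠ k' → ((g k : T) : Fin 5 →₀ ℕ) ≠ ((g k' : T) : Fin 5 →₀ ℕ) :=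
    fun k k' hkk h => hkk (hval h)
  have honeg : ∀ i j : Fin 3, i ≠ j →
      ((g i : T) : Fin 5 →₀ ℕ) 4 = 0 ∨ ((g j : T) : Fin 5 →₀ ℕ) 4 = 0 := by
    intro i j hij
    by_contra hc
    push_neg at hc
    exact hne i j hij (hone _ (g i).2 _ (g j).2 hc.1 hc.2)
  refine ⟨g 0, g 1, g 2, hne 0 1 (by decide), hne 0 2 (by decide), hne 1 2 (by decide),
    hq _ (g 0).2, hq _ (g 1).2, hq _ (g 2).2, ?_, ?_⟩
  · rw [wt_rho0 _ (hq _ (g 0).2), wt_rho0 _ (hq _ (g 1).2), wt_rho0 _ (hq _ (g 2).2)]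
    have hk0 := h4 _ (g 0).2
    have hk1 := h4 _ (g 1).2
    have hk2 := h4 _ (g 2).2
    have h01 := honeg 0 1 (by decide)
    have h02 := honeg 0 2 (by decide)
    have h12 := honeg 1 2 (by decide)
    omega
  · set L : Λ →ₗ[ℂ] (Fin 3 → ℂ) :=
      LinearMap.pi (fun i => (MvPolynomial.lcoeff ℂ ((g i : T) : Fin 5 →₀ ℕ)).comp Λ.subtype)
      with hL
    have hfe : (fun Q : Λ =>
        (![MvPolynomial.coeff ((g 0 : T) : Fin 5 →₀ ℕ) (Q : Quin),
           MvPolynomial.coeff ((g 1 : T) : Fin 5 →₀ ℕ) (Q : Quin),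
           MvPolynomial.coeff ((g 2 : T) : Fin 5 →₀ ℕ) (Q : Quin)] : Fin 3 → ℂ)) = ⇑L := by
      funext Q i
      fin_cases i <;> rfl
    rw [hfe]
    have hinj : Function.Injective L := by
      rw [← LinearMap.ker_eq_bot]
      rw [LinearMap.ker_eq_bot']
      intro x hx
      refine Subtype.ext (hgsep (x : Quin) x.2 fun k => ?_)
      exact congrFun hx k
    exact ⟨hinj, (LinearMap.injective_iff_surjective_of_finrank_eq_finrank
      (by rw [h3]; simp)).mp hinj⟩


/-- Characterization of `ρ1`-unstable nets, `ρ1 = (1,1,1,1,-4)`: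
either a pencil of the net is divisible by `e` (contains the hyperplane `e = 0`),
or `e² ∈ Λ` (an element of the net is singular along that hyperplane). -/
theorem rho1_unstable_iff (Λ : Submodule ℂ Quin) (hΛ : IsNet Λ) :
    ¬ SemistableWrt Λ (rho 0) ↔
      (2 ≤ Module.finrank ℂ ↥(Λ ⊓ monSpan fun m => m 4 ≠ 0) ∨
        (MvPolynomial.X 4 ^ 2 : Quin) ∈ Λ) := by
  haveI : FiniteDimensional ℂ Λ := FiniteDimensional.of_finrank_pos (by rw [hΛ.1]; omega)
  set K : Submodule ℂ Quin := Λ ⊓ monSpan fun m => m 4 ≠ 0 with hK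
  haveI hKfd : FiniteDimensional ℂ K := Submodule.finiteDimensional_of_le inf_le_left
  have hquad : ∀ Q ∈ Λ, ∀ m, MvPolynomial.coeff m Q ≠ 0 → QuadMon m := by
    intro Q hQ m hm
    refine quadMon_of_degree ?_
    by_contra hd
    exact hm ((hΛ.2 Q hQ).coeff_eq_zero hd)
  have hEfree : ∀ Q ∈ Λ, (∀ m, QuadMon m → m 4 = 0 → MvPolynomial.coeff m Q = 0) → Q ∈ K := by
    intro Q hQ h0
    refine ⟨hQ, mem_monSpan_iff.mpr ?_⟩
    intro m hm
    have hq := hquad Q hQ m hm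
    exact ⟨hq, fun h4 => hm (h0 m hq h4)⟩
  constructor
  · -- unstable → condition; contrapositive
    intro hns
    by_contra hc
    push_neg at hc
    obtain ⟨hA, hB⟩ := hc
    apply hns
    have hA' : Module.finrank ℂ K = 0 ∨ Module.finrank ℂ K = 1 := by omega
    rcases hA' with h0 | h1
    · -- K = ⊥
      have hK0 : K = ⊥ := Submodule.finrank_eq_zero.mp h0
      apply semistable_of_sep Λ hΛ.1 {m | QuadMon m ∧ m 4 = 0}
      · exact fun m hm => hm.1
      · exact fun m hm => by rw [hm.2]; omega
      · exact fun m hm m' hm' h h' => absurd hm.2 h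
      · intro Q hQ hvan
        have hQK : Q ∈ K := hEfree Q hQ fun m hq h4 => hvan m ⟨hq, h4⟩
        rw [hK0] at hQK
        simpa using hQK
    · -- dim K = 1
      obtain ⟨v, hv0, hvall⟩ := finrank_eq_one_iff'.mp h1
      set R : Quin := ((v : K) : Quin) with hRdef
      have hR0 : R ≠ 0 := by
        simpa [hRdef, Submodule.coe_eq_zero] using hv0
      have hRE : R ∈ monSpan (fun m => m 4 ≠ 0) := (v : K).2.2
      have hRΛ : R ∈ Λ := (v : K).2.1
      have hμ : ∃ μ, MvPolynomial.coeff μ R ≠ 0 ∧ QuadMon μ ∧ μ 4 ≠ 0 ∧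
          μ ≠ Finsupp.single 4 2 := by
        by_contra hcon
        push_neg at hcon
        have hall : ∀ μ, μ ≠ Finsupp.single 4 2 → MvPolynomial.coeff μ R = 0 := by
          intro μ hμne
          by_contra hcc
          obtain ⟨hq, h4⟩ := mem_monSpan_iff.mp hRE μ hcc
          exact hμne (hcon μ hcc hq h4)
        set c := MvPolynomial.coeff (Finsupp.single 4 2) R with hcdef
        have hRe : R = c • (MvPolynomial.X 4 : Quin) ^ 2 := by
          rw [X_pow_eq_monomial]
          apply MvPolynomial.ext
          intro μ
          rcases eq_or_ne μ (Finsupp.single 4 2) with rfl | hne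
          · simp [coeff_smul, coeff_monomial, hcdef]
          · rw [hall μ hne, coeff_smul, coeff_monomial, if_neg (Ne.symm hne), smul_zero]
        have hc0 : c ≠ 0 := fun h => hR0 (by rw [hRe, h, zero_smul])
        apply hB
        have hX : (MvPolynomial.X 4 : Quin) ^ 2 = c⁻¹ • R := by
          rw [hRe, smul_smul, inv_mul_cancel₀ hc0, one_smul]
        rw [hX]
        exact Submodule.smul_mem _ _ hRΛ
      obtain ⟨μ, hμc, hμq, hμ4, hμne⟩ := hμ
      have hμ41 : μ 4 ≤ 1 := by
        by_contra hge
        apply hμne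
        have hs := (quadMon_iff μ).mp hμq
        ext i
        fin_cases i <;> simp [Finsupp.single_apply] <;> omega
      apply semistable_of_sep Λ hΛ.1 ({m | QuadMon m ∧ m 4 = 0} ∪ {μ})
      · rintro m (hm | hm)
        · exact hm.1
        · rw [hm]; exact hμq
      · rintro m (hm | hm)
        · rw [hm.2]; omega
        · rw [hm]; exact hμ41
      · rintro m (hm | hm) m' (hm' | hm') h h'
        · exact absurd hm.2 h
        · exact absurd hm.2 h
        · exact absurd hm'.2 h'
        · rw [hm, hm']
      · intro Q hQ hvan
        have hQK : Q ∈ K := hEfree Q hQ fun m hq h4 => hvan m (Or.inl ⟨hq, h4⟩)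
        obtain ⟨c, hcv⟩ := hvall ⟨Q, hQK⟩
        have hQR : Q = c • R := by
          have h := congrArg Subtype.val hcv
          simpa [hRdef] using h.symm
        have hcoeff : MvPolynomial.coeff μ Q = c * MvPolynomial.coeff μ R := by
          rw [hQR, coeff_smul, smul_eq_mul]
        have h0 : MvPolynomial.coeff μ Q = 0 := hvan μ (Or.inr rfl)
        have hc0 : c = 0 := by
          rcases mul_eq_zero.mp (hcoeff ▸ h0 : c * MvPolynomial.coeff μ R = 0) with h | h
          · exact h
          · exact absurd h hμc
        rw [hQR, hc0, zero_smul]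
  · -- condition → unstable
    rintro h ⟨m1, m2, m3, h12, h13, h23, q1, q2, q3, hw, hbij⟩
    have hk : m1 4 + m2 4 + m3 4 ≤ 1 := by
      rw [wt_rho0 _ q1, wt_rho0 _ q2, wt_rho0 _ q3] at hw
      omega
    have contra : ∀ Q : Quin, Q ∈ Λ → MvPolynomial.coeff m1 Q = 0 →
        MvPolynomial.coeff m2 Q = 0 → MvPolynomial.coeff m3 Q = 0 → Q = 0 := by
      intro Q hQ h1 h2 h3
      have heq : (⟨Q, hQ⟩ : Λ) = (0 : Λ) := by
        apply hbij.1
        funext i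
        fin_cases i <;> simp [h1, h2, h3]
      exact Subtype.ext_iff.mp heq
    rcases h with hA | hB
    · -- pencil divisible by e
      have key : ∀ μ : Fin 5 →₀ ℕ, ∃ Q, Q ∈ K ∧ Q ≠ 0 ∧ MvPolynomial.coeff μ Q = 0 := by
        intro μ
        set φ := (MvPolynomial.lcoeff ℂ μ).domRestrict K with hφ
        have hrange : Module.finrank ℂ (LinearMap.range φ) ≤ 1 := by
          simpa using Submodule.finrank_le (LinearMap.range φ)
        have hrn : Module.finrank ℂ (LinearMap.range φ) + Module.finrank ℂ (LinearMap.ker φ)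
            = Module.finrank ℂ K := LinearMap.finrank_range_add_finrank_ker φ
        have hA' : 2 ≤ Module.finrank ℂ K := hA
        have hkerpos : 0 < Module.finrank ℂ (LinearMap.ker φ) := by omega
        have hnt : Nontrivial (LinearMap.ker φ) := Module.finrank_pos_iff (R := ℂ) |>.mp hkerpos
        obtain ⟨x, hx⟩ := exists_ne (0 : LinearMap.ker φ)
        refine ⟨((x : K) : Quin), (x : K).2, ?_, ?_⟩
        · intro h
          apply hx
          have : (x : K) = 0 := Subtype.ext h
          exact Subtype.ext this
        · exact x.2
      have hcases : (m1 4 = 0 ∧ m2 4 = 0) ∨ (m1 4 = 0 ∧ m3 4 = 0) ∨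
          (m2 4 = 0 ∧ m3 4 = 0) := by omega
      have hEcoeff : ∀ Q ∈ K, ∀ m : Fin 5 →₀ ℕ, m 4 = 0 → MvPolynomial.coeff m Q = 0 := by
        intro Q hQ m hm
        by_contra hcc
        exact (mem_monSpan_iff.mp hQ.2 m hcc).2 hm
      rcases hcases with ⟨e1, e2⟩ | ⟨e1, e2⟩ | ⟨e1, e2⟩
      · obtain ⟨Q, hQK, hQ0, hQμ⟩ := key m3
        exact hQ0 (contra Q hQK.1 (hEcoeff Q hQK m1 e1) (hEcoeff Q hQK m2 e2) hQμ)
      · obtain ⟨Q, hQK, hQ0, hQμ⟩ := key m2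
        exact hQ0 (contra Q hQK.1 (hEcoeff Q hQK m1 e1) hQμ (hEcoeff Q hQK m3 e2))
      · obtain ⟨Q, hQK, hQ0, hQμ⟩ := key m1
        exact hQ0 (contra Q hQK.1 hQμ (hEcoeff Q hQK m2 e1) (hEcoeff Q hQK m3 e2))
    · -- e² ∈ Λ
      have hne : ∀ m : Fin 5 →₀ ℕ, m 4 ≤ 1 →
          MvPolynomial.coeff m ((MvPolynomial.X 4 : Quin) ^ 2) = 0 := by
        intro m hm
        rw [X_pow_eq_monomial, coeff_monomial, if_neg]
        intro h
        rw [← h] at hm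
        simp [Finsupp.single_eq_same] at hm
      have h0 := contra _ hB (hne m1 (by omega)) (hne m2 (by omega)) (hne m3 (by omega))
      exact pow_ne_zero 2 (MvPolynomial.X_ne_zero 4) h0
end

section
/- A net of quadrics Λ in the variables a,b,c,d,e is ρ2-unstable, where ρ2=(2,2,2,-3,-3), if and only if at least one of the following holds: (a) Λ ⊆ (d,e) (every element of the net vanishes on the plane d=e=0); or (b) dim(Λ ∩ (d,e)) ≥ 2 and Λ ∩ span{d²,de,e²} ≠ 0 (a pencil of Λ contains the plane d=e=0, and an element of that pencil is singular along this plane). -/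
open MvPolynomial

/-- `(d,e)`: span of the quadratic monomials divisible by `d` or `e`. -/
noncomputable def idealDE : Submodule ℂ Quin := monSpan fun m => m 3 ≠ 0 ∨ m 4 ≠ 0

/-- `(d,e)² = span{d², de, e²}`. -/
noncomputable def sqDE : Submodule ℂ Quin := monSpan fun m => m 0 = 0 ∧ m 1 = 0 ∧ m 2 = 0


section Rho2Aux

open Module

/-! ### Auxiliary lemmas -/

lemma mem_monSpan {P : (Fin 5 →₀ ℕ) → Prop} {Q : Quin} :
    Q ∈ monSpan P ↔ ∀ m ∈ Q.support, QuadMon m ∧ P m := by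
  constructor
  · intro hQ m hm
    by_contra hc
    have hle : monSpan P ≤ LinearMap.ker (MvPolynomial.lcoeff ℂ m) := by
      rw [monSpan, Submodule.span_le]
      rintro _ ⟨μ, hμ, hPμ, rfl⟩
      simp only [SetLike.mem_coe, LinearMap.mem_ker, MvPolynomial.lcoeff_apply,
        MvPolynomial.coeff_monomial]
      rw [if_neg]
      rintro rfl
      exact hc ⟨hμ, hPμ⟩
    have h2 := hle hQ
    rw [LinearMap.mem_ker, MvPolynomial.lcoeff_apply] at h2
    exact (MvPolynomial.mem_support_iff.mp hm) h2
  · intro h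
    rw [← MvPolynomial.support_sum_monomial_coeff Q]
    refine Submodule.sum_mem _ fun m hm => ?_
    have h2 : (MvPolynomial.monomial m) (MvPolynomial.coeff m Q)
        = (MvPolynomial.coeff m Q) • (MvPolynomial.monomial m) (1:ℂ) := by
      rw [MvPolynomial.smul_monomial, smul_eq_mul, mul_one]
    rw [h2]
    exact Submodule.smul_mem _ _ (Submodule.subset_span ⟨m, (h m hm).1, (h m hm).2, rfl⟩)

lemma quadMon_of_coeff_ne_zero {Q : Quin} (h : Q.IsHomogeneous 2) {m : Fin 5 →₀ ℕ}
    (hm : MvPolynomial.coeff m Q ≠ 0) : QuadMon m := by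
  have h2 := h hm
  rw [Finsupp.weight_apply] at h2
  simpa only [QuadMon, Pi.one_apply, smul_eq_mul, mul_one] using h2

lemma quadMon_sum {m : Fin 5 →₀ ℕ} (h : QuadMon m) :
    m 0 + m 1 + m 2 + m 3 + m 4 = 2 := by
  have h' : (m.sum fun _ n => n) = 2 := h
  have h2 : (m.sum fun _ n => n) = ∑ i : Fin 5, m i :=
    Finsupp.sum_fintype _ _ fun _ => rfl
  rw [h2, Fin.sum_univ_five] at h'
  exact h'

lemma wt_rho2 {m : Fin 5 →₀ ℕ} (h : QuadMon m) :
    wt (rho 1) m = 4 - 5 * ((m 3 : ℤ) + (m 4 : ℤ)) := by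
  have h5 := quadMon_sum h
  have hrw : wt (rho 1) m = (m 0 : ℤ) * 2 + (m 1 : ℤ) * 2 + (m 2 : ℤ) * 2
      + (m 3 : ℤ) * (-3) + (m 4 : ℤ) * (-3) := by
    rw [wt, Fin.sum_univ_five]
    norm_num [rho]
    have e : ((![2, 2, 2, -3, -3] : Fin 5 → ℤ) 2 = 2) ∧ ((![2, 2, 2, -3, -3] : Fin 5 → ℤ) 3 = -3) ∧
      ((![2, 2, 2, -3, -3] : Fin 5 → ℤ) 4 = -3) := ⟨rfl, rfl, rfl⟩
    rw [e.1, e.2.1, e.2.2]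
    ring
  rw [hrw]
  omega

lemma finrank_le_step {V : Type} [AddCommGroup V] [Module ℂ V] [FiniteDimensional ℂ V]
    (N : Submodule ℂ V) (f : V →ₗ[ℂ] ℂ) :
    Module.finrank ℂ N ≤ Module.finrank ℂ ↥(N ⊓ LinearMap.ker f) + 1 := by
  have h1 := LinearMap.finrank_range_add_finrank_ker (f.comp N.subtype)
  have e : Module.finrank ℂ ↥(LinearMap.ker (f.comp N.subtype)) =
      Module.finrank ℂ ↥(N ⊓ LinearMap.ker f) := by
    rw [LinearMap.ker_comp,
      ← Submodule.finrank_map_subtype_eq N (Submodule.comap N.subtype (LinearMap.ker f)),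
      Submodule.map_comap_subtype]
  have h2 : Module.finrank ℂ ↥(LinearMap.range (f.comp N.subtype)) ≤ 1 := by
    have h3 := Submodule.finrank_le (LinearMap.range (f.comp N.subtype))
    simpa using h3
  omega

lemma finrank_eq_step {V : Type} [AddCommGroup V] [Module ℂ V] [FiniteDimensional ℂ V]
    (N : Submodule ℂ V) (f : V →ₗ[ℂ] ℂ) {q : V} (hq : q ∈ N) (hfq : f q ≠ 0) :
    Module.finrank ℂ ↥(N ⊓ LinearMap.ker f) + 1 = Module.finrank ℂ N := by
  have h1 := LinearMap.finrank_range_add_finrank_ker (f.comp N.subtype)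
  have e : Module.finrank ℂ ↥(LinearMap.ker (f.comp N.subtype)) =
      Module.finrank ℂ ↥(N ⊓ LinearMap.ker f) := by
    rw [LinearMap.ker_comp,
      ← Submodule.finrank_map_subtype_eq N (Submodule.comap N.subtype (LinearMap.ker f)),
      Submodule.map_comap_subtype]
  have h2 : LinearMap.range (f.comp N.subtype) = ⊤ := by
    rw [LinearMap.range_eq_top]
    intro c
    refine ⟨(c / f q) • ⟨q, hq⟩, ?_⟩
    rw [map_smul]
    simp only [LinearMap.comp_apply, Submodule.coe_subtype, smul_eq_mul]
    rw [div_mul_cancel₀ _ hfq]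
  rw [h2, finrank_top, Module.finrank_self] at h1
  omega

/-- The coefficient functional at `m`, restricted to `Λ`. -/
noncomputable def cf (Λ : Submodule ℂ Quin) (m : Fin 5 →₀ ℕ) : ↥Λ →ₗ[ℂ] ℂ :=
  (MvPolynomial.lcoeff ℂ m).comp Λ.subtype

lemma cf_apply (Λ : Submodule ℂ Quin) (m : Fin 5 →₀ ℕ) (Q : Λ) :
    cf Λ m Q = MvPolynomial.coeff m (Q : Quin) := rfl

lemma mem_ker_cf_iff {Λ : Submodule ℂ Quin} {m : Fin 5 →₀ ℕ} {Q : Λ} :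
    Q ∈ LinearMap.ker (cf Λ m) ↔ MvPolynomial.coeff m (Q : Quin) = 0 := by
  rw [LinearMap.mem_ker, cf_apply]

lemma bijective_triple (Λ : Submodule ℂ Quin) [FiniteDimensional ℂ Λ]
    (h3 : Module.finrank ℂ Λ = 3) (m1 m2 m3 : Fin 5 →₀ ℕ)
    (hker : ∀ Q : Λ, MvPolynomial.coeff m1 (Q:Quin) = 0 → MvPolynomial.coeff m2 (Q:Quin) = 0 →
      MvPolynomial.coeff m3 (Q:Quin) = 0 → Q = 0) :
    Function.Bijective (fun Q : Λ =>
      (![MvPolynomial.coeff m1 (Q : Quin), MvPolynomial.coeff m2 (Q : Quin),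
         MvPolynomial.coeff m3 (Q : Quin)] : Fin 3 → ℂ)) := by
  set L : ↥Λ →ₗ[ℂ] (Fin 3 → ℂ) := LinearMap.pi (fun i => ![cf Λ m1, cf Λ m2, cf Λ m3] i) with hL
  have hfun : (fun Q : Λ =>
      (![MvPolynomial.coeff m1 (Q : Quin), MvPolynomial.coeff m2 (Q : Quin),
         MvPolynomial.coeff m3 (Q : Quin)] : Fin 3 → ℂ)) = ⇑L := by
    funext Q
    funext i
    fin_cases i <;> rfl
  rw [hfun]
  have hinj : Function.Injective L := by
    rw [← LinearMap.ker_eq_bot, Submodule.eq_bot_iff]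
    intro Q hQ
    rw [LinearMap.mem_ker] at hQ
    have h0 : ∀ i : Fin 3, L Q i = 0 := fun i => by rw [hQ]; rfl
    exact hker Q (h0 0) (h0 1) (h0 2)
  refine ⟨hinj, ?_⟩
  have hfr : Module.finrank ℂ ↥Λ = Module.finrank ℂ (Fin 3 → ℂ) := by
    rw [h3, Module.finrank_fin_fun]
  exact (LinearMap.injective_iff_surjective_of_finrank_eq_finrank hfr).mp hinj

lemma triple_killer (Λ : Submodule ℂ Quin) (m1 m2 m3 : Fin 5 →₀ ℕ)
    (hbij : Function.Bijective (fun Q : Λ =>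
      (![MvPolynomial.coeff m1 (Q : Quin), MvPolynomial.coeff m2 (Q : Quin),
         MvPolynomial.coeff m3 (Q : Quin)] : Fin 3 → ℂ))) :
    ∀ Q : Λ, MvPolynomial.coeff m1 (Q:Quin) = 0 → MvPolynomial.coeff m2 (Q:Quin) = 0 →
      MvPolynomial.coeff m3 (Q:Quin) = 0 → Q = 0 := by
  intro Q h1 h2 h3
  apply hbij.1
  show (![MvPolynomial.coeff m1 (Q : Quin), MvPolynomial.coeff m2 (Q : Quin),
         MvPolynomial.coeff m3 (Q : Quin)] : Fin 3 → ℂ) = _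
  funext i
  fin_cases i <;> simp [h1, h2, h3]

lemma coeff_eq_zero_of_mem_idealDE {Q : Quin} (h : Q ∈ idealDE) {m : Fin 5 →₀ ℕ}
    (h3 : m 3 = 0) (h4 : m 4 = 0) : MvPolynomial.coeff m Q = 0 := by
  by_contra hc
  unfold idealDE at h
  rcases (mem_monSpan.mp h) m (MvPolynomial.mem_support_iff.mpr hc) with ⟨-, h' | h'⟩
  exacts [h' h3, h' h4]

lemma coeff_eq_zero_of_mem_sqDE {Q : Quin} (h : Q ∈ sqDE) {m : Fin 5 →₀ ℕ}
    (hm : m 3 + m 4 ≤ 1) : MvPolynomial.coeff m Q = 0 := by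
  by_contra hc
  unfold sqDE at h
  obtain ⟨hq, h0, h1, h2⟩ := (mem_monSpan.mp h) m (MvPolynomial.mem_support_iff.mpr hc)
  have h5 := quadMon_sum hq
  omega

lemma exists_mon_of_not_mem_idealDE {Q : Quin} (hQ : Q.IsHomogeneous 2) (h : Q ∉ idealDE) :
    ∃ m, MvPolynomial.coeff m Q ≠ 0 ∧ QuadMon m ∧ m 3 = 0 ∧ m 4 = 0 := by
  unfold idealDE at h
  rw [mem_monSpan] at h
  push_neg at h
  obtain ⟨m, hm, hbad⟩ := h
  have hcoeff := MvPolynomial.mem_support_iff.mp hm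
  have hquad := quadMon_of_coeff_ne_zero hQ hcoeff
  obtain ⟨h34a, h34b⟩ := hbad hquad
  exact ⟨m, hcoeff, hquad, h34a, h34b⟩

lemma exists_mon_of_not_mem_sqDE {Q : Quin} (hQ : Q.IsHomogeneous 2) (hid : Q ∈ idealDE)
    (h : Q ∉ sqDE) : ∃ m, MvPolynomial.coeff m Q ≠ 0 ∧ QuadMon m ∧ m 3 + m 4 = 1 := by
  unfold sqDE at h
  rw [mem_monSpan] at h
  push_neg at h
  obtain ⟨m, hm, hbad⟩ := h
  have hcoeff := MvPolynomial.mem_support_iff.mp hm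
  have hquad := quadMon_of_coeff_ne_zero hQ hcoeff
  have h012 := hbad hquad
  unfold idealDE at hid
  obtain ⟨-, h34⟩ := (mem_monSpan.mp hid) m hm
  have h5 := quadMon_sum hquad
  exact ⟨m, hcoeff, hquad, by omega⟩

lemma killer_of_chain (Λ : Submodule ℂ Quin) [FiniteDimensional ℂ Λ]
    (h3 : Module.finrank ℂ Λ = 3) (m1 m2 m3 : Fin 5 →₀ ℕ)
    (Q0 : Λ) (h01 : MvPolynomial.coeff m1 (Q0:Quin) ≠ 0)
    (Q1 : Λ) (h11 : MvPolynomial.coeff m1 (Q1:Quin) = 0)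
    (h12 : MvPolynomial.coeff m2 (Q1:Quin) ≠ 0)
    (Q2 : Λ) (h21 : MvPolynomial.coeff m1 (Q2:Quin) = 0)
    (h22 : MvPolynomial.coeff m2 (Q2:Quin) = 0)
    (h23 : MvPolynomial.coeff m3 (Q2:Quin) ≠ 0) :
    ∀ Q : Λ, MvPolynomial.coeff m1 (Q:Quin) = 0 → MvPolynomial.coeff m2 (Q:Quin) = 0 →
      MvPolynomial.coeff m3 (Q:Quin) = 0 → Q = 0 := by
  set K1 := (⊤ : Submodule ℂ Λ) ⊓ LinearMap.ker (cf Λ m1) with hK1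
  set K2 := K1 ⊓ LinearMap.ker (cf Λ m2) with hK2
  set K3 := K2 ⊓ LinearMap.ker (cf Λ m3) with hK3
  have e1 := finrank_eq_step (⊤ : Submodule ℂ Λ) (cf Λ m1) (Submodule.mem_top (x := Q0)) h01
  have e2 := finrank_eq_step K1 (cf Λ m2) (q := Q1)
    (Submodule.mem_inf.mpr ⟨Submodule.mem_top, mem_ker_cf_iff.mpr h11⟩) h12
  have e3 := finrank_eq_step K2 (cf Λ m3) (q := Q2)
    (Submodule.mem_inf.mpr ⟨Submodule.mem_inf.mpr ⟨Submodule.mem_top, mem_ker_cf_iff.mpr h21⟩,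
      mem_ker_cf_iff.mpr h22⟩) h23
  rw [← hK1] at e1
  rw [← hK2] at e2
  rw [← hK3] at e3
  rw [finrank_top, h3] at e1
  have hK3bot : K3 = ⊥ := Submodule.finrank_eq_zero.mp (by omega)
  intro Q hQ1 hQ2 hQ3
  have hmem : Q ∈ K3 := Submodule.mem_inf.mpr
    ⟨Submodule.mem_inf.mpr ⟨Submodule.mem_inf.mpr ⟨Submodule.mem_top, mem_ker_cf_iff.mpr hQ1⟩,
      mem_ker_cf_iff.mpr hQ2⟩, mem_ker_cf_iff.mpr hQ3⟩
  rw [hK3bot, Submodule.mem_bot] at hmem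
  exact hmem

lemma semistable_of_data (Λ : Submodule ℂ Quin) [FiniteDimensional ℂ Λ]
    (h3 : Module.finrank ℂ Λ = 3) {m1 m2 m3 : Fin 5 →₀ ℕ}
    (h12 : m1 ≠ m2) (h13 : m1 ≠ m3) (h23 : m2 ≠ m3)
    (hq1 : QuadMon m1) (hq2 : QuadMon m2) (hq3 : QuadMon m3)
    (hw : 0 ≤ wt (rho 1) m1 + wt (rho 1) m2 + wt (rho 1) m3)
    (hker : ∀ Q : Λ, MvPolynomial.coeff m1 (Q:Quin) = 0 → MvPolynomial.coeff m2 (Q:Quin) = 0 →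
      MvPolynomial.coeff m3 (Q:Quin) = 0 → Q = 0) :
    SemistableWrt Λ (rho 1) :=
  ⟨m1, m2, m3, h12, h13, h23, hq1, hq2, hq3, hw, bijective_triple Λ h3 m1 m2 m3 hker⟩

lemma unstable_helper1 (Λ : Submodule ℂ Quin) [FiniteDimensional ℂ Λ]
    (h3 : Module.finrank ℂ Λ = 3) (hle : Λ ≤ idealDE) (ma mb mc : Fin 5 →₀ ℕ)
    (hc3 : mc 3 = 0) (hc4 : mc 4 = 0)
    (hker : ∀ Q : Λ, MvPolynomial.coeff ma (Q:Quin) = 0 → MvPolynomial.coeff mb (Q:Quin) = 0 →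
      MvPolynomial.coeff mc (Q:Quin) = 0 → Q = 0) : False := by
  have s1 := finrank_le_step (⊤ : Submodule ℂ Λ) (cf Λ ma)
  have s2 := finrank_le_step ((⊤ : Submodule ℂ Λ) ⊓ LinearMap.ker (cf Λ ma)) (cf Λ mb)
  rw [finrank_top, h3] at s1
  have hNne : (⊤ : Submodule ℂ Λ) ⊓ LinearMap.ker (cf Λ ma) ⊓ LinearMap.ker (cf Λ mb) ≠ ⊥ := by
    intro hbot
    have h0 := Submodule.finrank_eq_zero.mpr hbot
    omega
  obtain ⟨Q, hQN, hQ0⟩ := (Submodule.ne_bot_iff _).mp hNne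
  obtain ⟨hQN1, hQb⟩ := Submodule.mem_inf.mp hQN
  obtain ⟨-, hQa⟩ := Submodule.mem_inf.mp hQN1
  exact hQ0 (hker Q (mem_ker_cf_iff.mp hQa) (mem_ker_cf_iff.mp hQb)
    (coeff_eq_zero_of_mem_idealDE (hle Q.2) hc3 hc4))

lemma unstable_helper2 (Λ : Submodule ℂ Quin) [FiniteDimensional ℂ Λ]
    (hk : 2 ≤ Module.finrank ℂ ↥(Λ ⊓ idealDE)) (ma mb mc : Fin 5 →₀ ℕ)
    (ha3 : ma 3 = 0) (ha4 : ma 4 = 0) (hb3 : mb 3 = 0) (hb4 : mb 4 = 0)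
    (hker : ∀ Q : Λ, MvPolynomial.coeff ma (Q:Quin) = 0 → MvPolynomial.coeff mb (Q:Quin) = 0 →
      MvPolynomial.coeff mc (Q:Quin) = 0 → Q = 0) : False := by
  set N : Submodule ℂ Λ := Submodule.comap Λ.subtype idealDE with hN
  have hfin : Module.finrank ℂ N = Module.finrank ℂ ↥(Λ ⊓ idealDE) := by
    rw [← Submodule.map_comap_subtype, Submodule.finrank_map_subtype_eq]
  have s := finrank_le_step N (cf Λ mc)
  have hNne : N ⊓ LinearMap.ker (cf Λ mc) ≠ ⊥ := by
    intro hbot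
    have h0 := Submodule.finrank_eq_zero.mpr hbot
    omega
  obtain ⟨Q, hQmem, hQ0⟩ := (Submodule.ne_bot_iff _).mp hNne
  obtain ⟨hQN, hQc⟩ := Submodule.mem_inf.mp hQmem
  have hQid : (Q:Quin) ∈ idealDE := hQN
  exact hQ0 (hker Q (coeff_eq_zero_of_mem_idealDE hQid ha3 ha4)
    (coeff_eq_zero_of_mem_idealDE hQid hb3 hb4) (mem_ker_cf_iff.mp hQc))

lemma unstable_helper3 (Λ : Submodule ℂ Quin) (hs : Λ ⊓ sqDE ≠ ⊥) (m1 m2 m3 : Fin 5 →₀ ℕ)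
    (h1 : m1 3 + m1 4 ≤ 1) (h2 : m2 3 + m2 4 ≤ 1) (h3 : m3 3 + m3 4 ≤ 1)
    (hker : ∀ Q : Λ, MvPolynomial.coeff m1 (Q:Quin) = 0 → MvPolynomial.coeff m2 (Q:Quin) = 0 →
      MvPolynomial.coeff m3 (Q:Quin) = 0 → Q = 0) : False := by
  obtain ⟨S, hS, hS0⟩ := (Submodule.ne_bot_iff _).mp hs
  obtain ⟨hSΛ, hSsq⟩ := hS
  have hz := hker ⟨S, hSΛ⟩ (coeff_eq_zero_of_mem_sqDE hSsq h1)
    (coeff_eq_zero_of_mem_sqDE hSsq h2) (coeff_eq_zero_of_mem_sqDE hSsq h3)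
  exact hS0 (by simpa using congrArg Subtype.val hz)

end Rho2Aux

/-- Characterization of `ρ2`-unstable nets, `ρ2 = (2,2,2,-3,-3)`:
either the net contains the plane `d = e = 0`, or a pencil of the net contains this plane
and an element of that pencil is singular along it. -/
theorem rho2_unstable_iff (Λ : Submodule ℂ Quin) (hΛ : IsNet Λ) :
    ¬ SemistableWrt Λ (rho 1) ↔
      (Λ ≤ idealDE ∨
        (2 ≤ Module.finrank ℂ ↥(Λ ⊓ idealDE) ∧ Λ ⊓ sqDE ≠ ⊥)) := by
  obtain ⟨h3, hhom⟩ := hΛ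
  haveI : FiniteDimensional ℂ Λ := FiniteDimensional.of_finrank_pos (by rw [h3]; norm_num)
  constructor
  · intro huns
    by_contra hc
    push_neg at hc
    obtain ⟨hnle, himp⟩ := hc
    apply huns
    obtain ⟨Q0, hQ0Λ, hQ0n⟩ := SetLike.not_le_iff_exists.mp hnle
    obtain ⟨m1, hm1c, hm1q, hm13, hm14⟩ := exists_mon_of_not_mem_idealDE (hhom Q0 hQ0Λ) hQ0n
    by_cases hcase : ∃ Q : Λ, MvPolynomial.coeff m1 (Q:Quin) = 0 ∧ (Q:Quin) ∉ idealDE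
    · -- a second element outside idealDE in the kernel of the first functional
      obtain ⟨Q1, hQ1k, hQ1n⟩ := hcase
      obtain ⟨m2, hm2c, hm2q, hm23, hm24⟩ := exists_mon_of_not_mem_idealDE (hhom _ Q1.2) hQ1n
      have hne12 : m1 ≠ m2 := fun h => hm2c (h ▸ hQ1k)
      have e1 := finrank_eq_step (⊤ : Submodule ℂ Λ) (cf Λ m1)
        (Submodule.mem_top (x := (⟨Q0, hQ0Λ⟩ : Λ))) hm1c
      have e2 := finrank_eq_step ((⊤ : Submodule ℂ Λ) ⊓ LinearMap.ker (cf Λ m1)) (cf Λ m2)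
        (q := Q1) (Submodule.mem_inf.mpr ⟨Submodule.mem_top, mem_ker_cf_iff.mpr hQ1k⟩) hm2c
      rw [finrank_top, h3] at e1
      have hK2ne : (⊤ : Submodule ℂ Λ) ⊓ LinearMap.ker (cf Λ m1) ⊓ LinearMap.ker (cf Λ m2)
          ≠ ⊥ := by
        intro hb
        have h0 := Submodule.finrank_eq_zero.mpr hb
        omega
      obtain ⟨Q2, hQ2mem, hQ2ne⟩ := (Submodule.ne_bot_iff _).mp hK2ne
      obtain ⟨hQ2m1, hQ2k2⟩ := Submodule.mem_inf.mp hQ2mem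
      obtain ⟨-, hQ2k1⟩ := Submodule.mem_inf.mp hQ2m1
      have hQ2c1 : MvPolynomial.coeff m1 (Q2:Quin) = 0 := mem_ker_cf_iff.mp hQ2k1
      have hQ2c2 : MvPolynomial.coeff m2 (Q2:Quin) = 0 := mem_ker_cf_iff.mp hQ2k2
      have hQ2z : (Q2:Quin) ≠ 0 := fun h => hQ2ne (Subtype.ext h)
      obtain ⟨m3, hm3c⟩ := MvPolynomial.ne_zero_iff.mp hQ2z
      have hm3q := quadMon_of_coeff_ne_zero (hhom _ Q2.2) hm3c
      have hne13 : m1 ≠ m3 := fun h => hm3c (h ▸ hQ2c1)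
      have hne23 : m2 ≠ m3 := fun h => hm3c (h ▸ hQ2c2)
      refine semistable_of_data Λ h3 hne12 hne13 hne23 hm1q hm2q hm3q ?_
        (killer_of_chain Λ h3 m1 m2 m3 ⟨Q0, hQ0Λ⟩ hm1c Q1 hQ1k hm2c Q2 hQ2c1 hQ2c2 hm3c)
      have w1 := wt_rho2 hm1q
      have w2 := wt_rho2 hm2q
      have w3 := wt_rho2 hm3q
      have s3 := quadMon_sum hm3q
      rw [w1, w2, w3]
      omega
    · -- the kernel of the first functional is contained in idealDE
      push_neg at hcase
      have e1 := finrank_eq_step (⊤ : Submodule ℂ Λ) (cf Λ m1)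
        (Submodule.mem_top (x := (⟨Q0, hQ0Λ⟩ : Λ))) hm1c
      rw [finrank_top, h3] at e1
      haveI : FiniteDimensional ℂ ↥(Λ ⊓ idealDE) :=
        Submodule.finiteDimensional_of_le (inf_le_left : Λ ⊓ idealDE ≤ Λ)
      have hK1le : Submodule.map Λ.subtype ((⊤ : Submodule ℂ Λ) ⊓ LinearMap.ker (cf Λ m1))
          ≤ Λ ⊓ idealDE := by
        rintro _ ⟨Q, hQ, rfl⟩
        exact ⟨Q.2, hcase Q (mem_ker_cf_iff.mp (Submodule.mem_inf.mp hQ).2)⟩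
      have hk2 : 2 ≤ Module.finrank ℂ ↥(Λ ⊓ idealDE) := by
        have hmono := Submodule.finrank_mono hK1le
        rw [Submodule.finrank_map_subtype_eq] at hmono
        omega
      have hsq := himp hk2
      have hK1ne : (⊤ : Submodule ℂ Λ) ⊓ LinearMap.ker (cf Λ m1) ≠ ⊥ := by
        intro hb
        have h0 := Submodule.finrank_eq_zero.mpr hb
        omega
      obtain ⟨Q1, hQ1K, hQ1ne⟩ := (Submodule.ne_bot_iff _).mp hK1ne
      have hQ1k : MvPolynomial.coeff m1 (Q1:Quin) = 0 :=
        mem_ker_cf_iff.mp (Submodule.mem_inf.mp hQ1K).2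
      have hQ1id : (Q1:Quin) ∈ idealDE := hcase Q1 hQ1k
      have hnsq : ∀ Q : Λ, Q ≠ 0 → (Q:Quin) ∉ sqDE := by
        intro Q hQne hmem
        apply hQne
        have hQin : (Q:Quin) ∈ Λ ⊓ sqDE := ⟨Q.2, hmem⟩
        rw [hsq, Submodule.mem_bot] at hQin
        exact Subtype.ext hQin
      obtain ⟨m2, hm2c, hm2q, hm2s⟩ :=
        exists_mon_of_not_mem_sqDE (hhom _ Q1.2) hQ1id (hnsq Q1 hQ1ne)
      have hne12 : m1 ≠ m2 := by
        intro h
        rw [← h] at hm2s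
        omega
      have e2 := finrank_eq_step ((⊤ : Submodule ℂ Λ) ⊓ LinearMap.ker (cf Λ m1)) (cf Λ m2)
        (q := Q1) hQ1K hm2c
      have hK2ne : (⊤ : Submodule ℂ Λ) ⊓ LinearMap.ker (cf Λ m1) ⊓ LinearMap.ker (cf Λ m2)
          ≠ ⊥ := by
        intro hb
        have h0 := Submodule.finrank_eq_zero.mpr hb
        omega
      obtain ⟨Q2, hQ2mem, hQ2ne⟩ := (Submodule.ne_bot_iff _).mp hK2ne
      obtain ⟨hQ2m1, hQ2k2⟩ := Submodule.mem_inf.mp hQ2mem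
      have hQ2c1 : MvPolynomial.coeff m1 (Q2:Quin) = 0 :=
        mem_ker_cf_iff.mp (Submodule.mem_inf.mp hQ2m1).2
      have hQ2c2 : MvPolynomial.coeff m2 (Q2:Quin) = 0 := mem_ker_cf_iff.mp hQ2k2
      have hQ2id : (Q2:Quin) ∈ idealDE := hcase Q2 hQ2c1
      obtain ⟨m3, hm3c, hm3q, hm3s⟩ :=
        exists_mon_of_not_mem_sqDE (hhom _ Q2.2) hQ2id (hnsq Q2 hQ2ne)
      have hne23 : m2 ≠ m3 := fun h => hm3c (h ▸ hQ2c2)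
      have hne13 : m1 ≠ m3 := by
        intro h
        rw [← h] at hm3s
        omega
      refine semistable_of_data Λ h3 hne12 hne13 hne23 hm1q hm2q hm3q ?_
        (killer_of_chain Λ h3 m1 m2 m3 ⟨Q0, hQ0Λ⟩ hm1c Q1 hQ1k hm2c Q2 hQ2c1 hQ2c2 hm3c)
      have w1 := wt_rho2 hm1q
      have w2 := wt_rho2 hm2q
      have w3 := wt_rho2 hm3q
      rw [w1, w2, w3]
      omega
  · rintro hRHS ⟨m1, m2, m3, h12, h13, h23, hq1, hq2, hq3, hw, hbij⟩
    have hker := triple_killer Λ m1 m2 m3 hbij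
    have w1 := wt_rho2 hq1
    have w2 := wt_rho2 hq2
    have w3 := wt_rho2 hq3
    rw [w1, w2, w3] at hw
    rcases hRHS with hle | ⟨hk, hs⟩
    · by_cases c1 : m1 3 = 0 ∧ m1 4 = 0
      · exact unstable_helper1 Λ h3 hle m2 m3 m1 c1.1 c1.2
          (fun Q a b c => hker Q c a b)
      by_cases c2 : m2 3 = 0 ∧ m2 4 = 0
      · exact unstable_helper1 Λ h3 hle m1 m3 m2 c2.1 c2.2
          (fun Q a b c => hker Q a c b)
      by_cases c3 : m3 3 = 0 ∧ m3 4 = 0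
      · exact unstable_helper1 Λ h3 hle m1 m2 m3 c3.1 c3.2 hker
      · omega
    · by_cases c12 : (m1 3 = 0 ∧ m1 4 = 0) ∧ (m2 3 = 0 ∧ m2 4 = 0)
      · exact unstable_helper2 Λ hk m1 m2 m3 c12.1.1 c12.1.2 c12.2.1 c12.2.2 hker
      by_cases c13 : (m1 3 = 0 ∧ m1 4 = 0) ∧ (m3 3 = 0 ∧ m3 4 = 0)
      · exact unstable_helper2 Λ hk m1 m3 m2 c13.1.1 c13.1.2 c13.2.1 c13.2.2
          (fun Q a b c => hker Q a c b)
      by_cases c23 : (m2 3 = 0 ∧ m2 4 = 0) ∧ (m3 3 = 0 ∧ m3 4 = 0)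
      · exact unstable_helper2 Λ hk m2 m3 m1 c23.1.1 c23.1.2 c23.2.1 c23.2.2
          (fun Q a b c => hker Q c a b)
      · exact unstable_helper3 Λ hs m1 m2 m3 (by omega) (by omega) (by omega) hker
end

section
/- Let A and B be symmetric 5×5 complex matrices, with rank(A)=4, and let v ∈ ℂ⁵ be a nonzero vector spanning the kernel of A. Then the polynomial t ↦ det(A+tB) is divisible by t² (equivalently, it has a root of multiplicity at least two at t=0 or is identically zero) if and only if vᵀBv = 0, i.e. the quadric defined by B passes through the vertex of the quadric defined by A. -/
open MvPolynomial

section AuxPencil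
open Polynomial Matrix

private theorem det_pencil_doubleRoot_iff_aux (A B : Matrix (Fin 5) (Fin 5) ℂ)
    (hA : A.IsSymm) (hB : B.IsSymm) (hrk : A.rank = 4)
    (v : Fin 5 → ℂ) (hv : v ≠ 0) (hker : A.mulVec v = 0) :
    (Polynomial.X ^ 2 ∣
        (A.map Polynomial.C + (Polynomial.X : Polynomial ℂ) • B.map Polynomial.C).det) ↔
      dotProduct v (B.mulVec v) = 0 := by
  classical
  obtain ⟨i0, hi0⟩ : ∃ i, v i ≠ 0 := by
    by_contra h; push_neg at h; exact hv (funext h)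
  set g : Matrix (Fin 5) (Fin 5) ℂ := (1 : Matrix (Fin 5) (Fin 5) ℂ).updateCol i0 v with hg
  have hdetg : g.det = v i0 := by
    have := Matrix.cramer_apply (1 : Matrix (Fin 5) (Fin 5) ℂ) v i0
    rw [Matrix.cramer_one] at this
    simpa [hg] using this.symm
  have hgu : IsUnit g.det := by rw [hdetg]; exact isUnit_iff_ne_zero.mpr hi0
  have hginj : Function.Injective g.mulVec :=
    mulVec_injective_iff_isUnit.mpr ((Matrix.isUnit_iff_isUnit_det g).mpr hgu)
  have hgtinj : Function.Injective gᵀ.mulVec :=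
    mulVec_injective_iff_isUnit.mpr ((Matrix.isUnit_iff_isUnit_det gᵀ).mpr (by rwa [det_transpose]))
  have hge : g.mulVec (Pi.single i0 1) = v := by
    ext j
    simp [g, Matrix.mulVec_single, Matrix.updateCol_apply]
  -- kernel of A is spanned by v
  have hkerA : ∀ w : Fin 5 → ℂ, A.mulVec w = 0 → ∃ c : ℂ, w = c • v := by
    have hvmem : v ∈ LinearMap.ker A.mulVecLin := by
      simpa [Matrix.mulVecLin_apply] using hker
    have hspan : (ℂ ∙ v) ≤ LinearMap.ker A.mulVecLin :=
      (Submodule.span_singleton_le_iff_mem _ _).mpr hvmem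
    have hdim : Module.finrank ℂ (LinearMap.ker A.mulVecLin) = 1 := by
      have h5 : Module.finrank ℂ (LinearMap.range A.mulVecLin)
          + Module.finrank ℂ (LinearMap.ker A.mulVecLin) = 5 := by
        simpa using LinearMap.finrank_range_add_finrank_ker A.mulVecLin
      have : Module.finrank ℂ (LinearMap.range A.mulVecLin) = 4 := hrk
      omega
    have heq : (ℂ ∙ v) = LinearMap.ker A.mulVecLin := by
      apply Submodule.eq_of_le_of_finrank_eq hspan
      rw [hdim, finrank_span_singleton hv]
    intro w hw
    have : w ∈ (ℂ ∙ v) := heq ▸ (by simpa [Matrix.mulVecLin_apply] using hw)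
    obtain ⟨c, hc⟩ := Submodule.mem_span_singleton.mp this
    exact ⟨c, hc.symm⟩
  set A' : Matrix (Fin 5) (Fin 5) ℂ := gᵀ * A * g with hA'
  set B' : Matrix (Fin 5) (Fin 5) ℂ := gᵀ * B * g with hB'
  have hgcol : ∀ k, g k i0 = v k := by
    intro k; simp [g, Matrix.updateCol_apply]
  have hvA : v ᵥ* A = 0 := by
    rw [← hA, Matrix.vecMul_transpose, hker]
  have hvA' : ∀ x, (∑ y, v y * A y x) = 0 := by
    intro x
    have := congrFun hvA x
    simpa [Matrix.vecMul, dotProduct] using this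
  have hrow : ∀ j, A' i0 j = 0 := by
    intro j
    have : A' i0 j = ∑ x, (∑ y, v y * A y x) * g x j := by
      simp only [hA', Matrix.mul_apply, Matrix.transpose_apply]
      refine Finset.sum_congr rfl fun x _ => ?_
      congr 1
      exact Finset.sum_congr rfl fun y _ => by rw [hgcol]
    rw [this]
    simp [hvA']
  have hcol : ∀ i, A' i i0 = 0 := by
    intro i
    have h1 : A' i i0 = ((gᵀ * A) *ᵥ v) i := by
      simp only [hA', Matrix.mul_apply, Matrix.mulVec, dotProduct]
      exact Finset.sum_congr rfl fun x _ => by rw [hgcol]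
    rw [h1, ← Matrix.mulVec_mulVec, hker]
    simp
  have hB00 : B' i0 i0 = dotProduct v (B.mulVec v) := by
    simp only [hB', Matrix.mul_apply, Matrix.transpose_apply, dotProduct, Matrix.mulVec]
    simp only [hgcol, Finset.sum_mul]
    rw [Finset.sum_comm]
    refine Finset.sum_congr rfl fun y _ => ?_
    rw [Finset.mul_sum]
    exact Finset.sum_congr rfl fun x _ => by ring
  -- the cofactor is nonzero
  have hd : (A'.updateRow i0 (Pi.single i0 1)).det ≠ 0 := by
    intro h0
    obtain ⟨u, hu, hDu⟩ := (Matrix.exists_mulVec_eq_zero_iff).mpr h0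
    have hui0 : u i0 = 0 := by
      have := congrFun hDu i0
      simpa [Matrix.mulVec, dotProduct, Pi.single_apply] using this
    have hA'u : A' *ᵥ u = 0 := by
      ext i
      by_cases hi : i = i0
      · subst hi; simp [Matrix.mulVec, dotProduct, hrow]
      · have := congrFun hDu i
        simpa [Matrix.mulVec, Matrix.updateRow_ne hi] using this
    have h2 : A *ᵥ (g *ᵥ u) = 0 := by
      apply hgtinj
      rw [Matrix.mulVec_mulVec, Matrix.mulVec_mulVec, Matrix.mulVec_zero]
      exact hA'u
    obtain ⟨c, hc⟩ := hkerA _ h2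
    have huc : u = c • (Pi.single i0 1 : Fin 5 → ℂ) := by
      apply hginj
      rw [hc, ← hge, Matrix.mulVec_smul]
    have : u i0 = c := by rw [huc]; simp
    rw [hui0] at this
    rw [huc, ← this] at hu
    simp at hu
  -- polynomial manipulations
  set Pm : Matrix (Fin 5) (Fin 5) ℂ[X] :=
    A.map Polynomial.C + (X : ℂ[X]) • B.map Polynomial.C with hPm
  set Mp : Matrix (Fin 5) (Fin 5) ℂ[X] :=
    A'.map Polynomial.C + (X : ℂ[X]) • B'.map Polynomial.C with hMp
  have hfac : Mp = gᵀ.map Polynomial.C * Pm * g.map Polynomial.C := by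
    rw [hMp, hPm, hA', hB']
    rw [Matrix.mul_add, Matrix.add_mul, Matrix.mul_smul, Matrix.smul_mul]
    rw [Matrix.map_mul, Matrix.map_mul, Matrix.map_mul, Matrix.map_mul]
  have hdetfac : Mp.det = Polynomial.C g.det * Polynomial.C g.det * Pm.det := by
    rw [hfac, Matrix.det_mul, Matrix.det_mul]
    rw [← RingHom.mapMatrix_apply, ← RingHom.mapMatrix_apply, ← RingHom.map_det,
      ← RingHom.map_det, Matrix.det_transpose]
    ring
  have hunit : IsUnit (Polynomial.C g.det * Polynomial.C g.det : ℂ[X]) :=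
    (hgu.map Polynomial.C).mul (hgu.map Polynomial.C)
  have hdvd1 : (X : ℂ[X]) ^ 2 ∣ Pm.det ↔ (X : ℂ[X]) ^ 2 ∣ Mp.det := by
    rw [hdetfac]
    exact ⟨fun h => h.mul_left _, fun h => (hunit.dvd_mul_left).mp h⟩
  set N : Matrix (Fin 5) (Fin 5) ℂ[X] :=
    Mp.updateRow i0 (fun j => Polynomial.C (B' i0 j)) with hN
  have hMrow : Mp i0 = (X : ℂ[X]) • fun j => Polynomial.C (B' i0 j) := by
    ext j
    simp [hMp, Matrix.add_apply, Matrix.map_apply, hrow j]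
  have hdetMp : Mp.det = Polynomial.X * N.det := by
    conv_lhs => rw [← Matrix.updateRow_eq_self Mp i0, hMrow]
    rw [Matrix.det_updateRow_smul]
  have hdvd2 : (X : ℂ[X]) ^ 2 ∣ Mp.det ↔ (X : ℂ[X]) ∣ N.det := by
    rw [hdetMp, pow_two]
    exact mul_dvd_mul_iff_left (a := (Polynomial.X : ℂ[X])) Polynomial.X_ne_zero
  have hN0 : N.map (Polynomial.evalRingHom 0) = A'.updateRow i0 (B' i0) := by
    ext i j
    by_cases hi : i = i0
    · subst hi
      simp [hN, Matrix.map_apply, Matrix.updateRow_self]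
    · simp [hN, Matrix.map_apply, Matrix.updateRow_ne hi, hMp, Matrix.add_apply]
  have hdetN0 : (A'.updateRow i0 (B' i0)).det = B' i0 i0 * (A'.updateRow i0 (Pi.single i0 1)).det := by
    have hsplit : B' i0 = B' i0 i0 • (Pi.single i0 1 : Fin 5 → ℂ) + Function.update (B' i0) i0 0 := by
      ext j
      by_cases hj : j = i0 <;> simp [hj, Pi.single_apply, Function.update_apply]
    conv_lhs => rw [hsplit]
    rw [Matrix.det_updateRow_add, Matrix.det_updateRow_smul]
    have hz : (A'.updateRow i0 (Function.update (B' i0) i0 0)).det = 0 := by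
      apply Matrix.det_eq_zero_of_column_eq_zero i0
      intro i
      by_cases hi : i = i0
      · subst hi; simp [Matrix.updateRow_self]
      · simp [Matrix.updateRow_ne hi, hcol i]
    rw [hz, add_zero]
  have hcoeff : N.det.coeff 0 = B' i0 i0 * (A'.updateRow i0 (Pi.single i0 1)).det := by
    rw [Polynomial.coeff_zero_eq_eval_zero, ← Polynomial.coe_evalRingHom,
      RingHom.map_det, RingHom.mapMatrix_apply, hN0, hdetN0]
  constructor
  · intro h
    have hXdvd : (X : ℂ[X]) ∣ N.det := hdvd2.mp (hdvd1.mp h)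
    have := Polynomial.X_dvd_iff.mp hXdvd
    rw [hcoeff] at this
    rcases mul_eq_zero.mp this with h1 | h1
    · rwa [hB00] at h1
    · exact absurd h1 hd
  · intro h
    apply hdvd1.mpr
    apply hdvd2.mpr
    rw [Polynomial.X_dvd_iff, hcoeff, hB00, h, zero_mul]

end AuxPencil

/-- Let `A` be a symmetric rank-4 matrix with kernel spanned by `v`, and
`B` symmetric. Then `det(A + tB)` vanishes to order at least two at `t = 0` (or is
identically zero) if and only if the quadric of `B` passes through the vertex of the
quadric of `A`, i.e. `vᵀBv = 0`. -/
theorem det_pencil_doubleRoot_iff (A B : Matrix (Fin 5) (Fin 5) ℂ)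
    (hA : A.IsSymm) (hB : B.IsSymm) (hrk : A.rank = 4)
    (v : Fin 5 → ℂ) (hv : v ≠ 0) (hker : A.mulVec v = 0) :
    (Polynomial.X ^ 2 ∣
        (A.map Polynomial.C + (Polynomial.X : Polynomial ℂ) • B.map Polynomial.C).det) ↔
      dotProduct v (B.mulVec v) = 0 :=
  det_pencil_doubleRoot_iff_aux A B hA hB hrk v hv hker
end

section
/- Let f ∈ ℂ[x,y,z] be an irreducible quadratic form and let Q be a quadratic form in five variables a,b,c,d,e such that Q(x², xy, y², yz, z²) = f(x,y,z)² as polynomials in x,y,z (so the quadric Q cuts out on the Veronese quartic surface V = {ac−b² = ce−d² = 0} ⊂ ℙ⁴ the double of an irreducible conic). Then either (i) the coefficient of xz in f is zero, so that f is a linear combination of x², xy, y², yz, z² and the double curve is a double hyperplane section of V; or (ii) there exists g ∈ GL(5,ℂ), acting by linear substitution of a,b,c,d,e, mapping the net span(ac−b², ce−d², Q) onto the net of the balanced ribbon span(ac−b², ce−d², ae−2bd+c²). -/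
open MvPolynomial

/-- The Veronese map `ℂ[a,b,c,d,e] → ℂ[x,y,z]` given by
`a ↦ x², b ↦ xy, c ↦ y², d ↦ yz, e ↦ z²`. -/
noncomputable def veroneseSubst : Quin →ₐ[ℂ] MvPolynomial (Fin 3) ℂ :=
  MvPolynomial.aeval
    ![(MvPolynomial.X 0 : MvPolynomial (Fin 3) ℂ) ^ 2,
      MvPolynomial.X 0 * MvPolynomial.X 1,
      MvPolynomial.X 1 ^ 2,
      MvPolynomial.X 1 * MvPolynomial.X 2,
      MvPolynomial.X 2 ^ 2]

noncomputable def E (a b c d e : ℕ) : Fin 5 →₀ ℕ :=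
  Finsupp.single 0 a + Finsupp.single 1 b + Finsupp.single 2 c + Finsupp.single 3 d +
    Finsupp.single 4 e

lemma E_apply (a b c d e : ℕ) (i : Fin 5) : E a b c d e i = ![a,b,c,d,e] i := by
  fin_cases i <;> simp [E, Finsupp.single_apply]

lemma E_ext {m : Fin 5 →₀ ℕ} {a b c d e : ℕ} (h0 : m 0 = a) (h1 : m 1 = b) (h2 : m 2 = c)
    (h3 : m 3 = d) (h4 : m 4 = e) : m = E a b c d e := by
  ext i; rw [E_apply]; fin_cases i <;> simpa

lemma E_eq_iff {a b c d e a' b' c' d' e' : ℕ} :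
    E a b c d e = E a' b' c' d' e' ↔ a = a' ∧ b = b' ∧ c = c' ∧ d = d' ∧ e = e' := by
  constructor
  · intro h
    have h0 := DFunLike.congr_fun h 0
    have h1 := DFunLike.congr_fun h 1
    have h2 := DFunLike.congr_fun h 2
    have h3 := DFunLike.congr_fun h 3
    have h4 := DFunLike.congr_fun h 4
    simp [E_apply] at h0 h1 h2 h3 h4
    exact ⟨h0, h1, h2, h3, h4⟩
  · rintro ⟨rfl, rfl, rfl, rfl, rfl⟩; rfl

lemma degree_five (m : Fin 5 →₀ ℕ) : m.degree = m 0 + m 1 + m 2 + m 3 + m 4 := by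
  rw [Finsupp.degree_apply, Finset.sum_subset (Finset.subset_univ _)
    (by intro i _ hi; exact Finsupp.notMem_support_iff.mp hi), Fin.sum_univ_five]


noncomputable def E3 (a b c : ℕ) : Fin 3 →₀ ℕ :=
  Finsupp.single 0 a + Finsupp.single 1 b + Finsupp.single 2 c

lemma E3_apply (a b c : ℕ) (i : Fin 3) : E3 a b c i = ![a,b,c] i := by
  fin_cases i <;> simp [E3, Finsupp.single_apply]

lemma E3_ext {m : Fin 3 →₀ ℕ} {a b c : ℕ} (h0 : m 0 = a) (h1 : m 1 = b) (h2 : m 2 = c) :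
    m = E3 a b c := by
  ext i; rw [E3_apply]; fin_cases i <;> simpa

lemma E3_eq_iff {a b c a' b' c' : ℕ} :
    E3 a b c = E3 a' b' c' ↔ a = a' ∧ b = b' ∧ c = c' := by
  constructor
  · intro h
    have h0 := DFunLike.congr_fun h 0
    have h1 := DFunLike.congr_fun h 1
    have h2 := DFunLike.congr_fun h 2
    simp [E3_apply] at h0 h1 h2
    exact ⟨h0, h1, h2⟩
  · rintro ⟨rfl, rfl, rfl⟩; rfl

noncomputable def vT (m : Fin 5 →₀ ℕ) : Fin 3 →₀ ℕ :=
  E3 (2*m 0 + m 1) (m 1 + 2*m 2 + m 3) (m 3 + 2*m 4)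

lemma veroneseSubst_monomial (m : Fin 5 →₀ ℕ) (c : ℂ) :
    veroneseSubst (monomial m c) = monomial (vT m) c := by
  rw [veroneseSubst, aeval_monomial, monomial_eq, vT]
  rw [Finsupp.prod_fintype _ _ (fun i => pow_zero _),
      Finsupp.prod_fintype _ _ (fun i => pow_zero _)]
  rw [Fin.prod_univ_five, Fin.prod_univ_three]
  simp only [E3_apply, Matrix.cons_val_zero, Matrix.cons_val_one, Matrix.head_cons,
    Matrix.cons_val_two, Matrix.cons_val_three, Matrix.cons_val_four, Matrix.tail_cons,
    algebraMap_eq]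
  ring

lemma coeff_veroneseSubst (p : Quin) (m' : Fin 3 →₀ ℕ) :
    coeff m' (veroneseSubst p) = ∑ n ∈ p.support, if vT n = m' then coeff n p else 0 := by
  conv_lhs => rw [← p.support_sum_monomial_coeff, map_sum]
  rw [coeff_sum]
  exact Finset.sum_congr rfl fun n _ => by rw [veroneseSubst_monomial, coeff_monomial]

lemma sum_unique (R : Quin) {m : Fin 5 →₀ ℕ} {m' : Fin 3 →₀ ℕ}
    (hm : vT m = m') (huniq : ∀ n : Fin 5 →₀ ℕ, vT n = m' → n = m) :
    (∑ n ∈ R.support, if vT n = m' then coeff n R else 0) = coeff m R := by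
  rw [Finset.sum_congr rfl (g := fun n => if n = m then coeff n R else 0) (fun n _ => by
    show (if vT n = m' then coeff n R else 0) = if n = m then coeff n R else 0
    by_cases h : vT n = m'
    · rw [if_pos h, if_pos (huniq n h)]
    · rw [if_neg h, if_neg (fun e : n = m => h (e ▸ hm))])]
  rw [Finset.sum_ite_eq' R.support m (fun n => coeff n R)]
  split
  · rfl
  · exact (MvPolynomial.notMem_support_iff.mp ‹_›).symm

lemma sum_pair (R : Quin) {m₁ m₂ : Fin 5 →₀ ℕ} {m' : Fin 3 →₀ ℕ}
    (h1 : vT m₁ = m') (h2 : vT m₂ = m') (hne : m₁ ≠ m₂)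
    (huniq : ∀ n : Fin 5 →₀ ℕ, vT n = m' → n = m₁ ∨ n = m₂) :
    (∑ n ∈ R.support, if vT n = m' then coeff n R else 0) = coeff m₁ R + coeff m₂ R := by
  rw [Finset.sum_congr rfl
    (g := fun n => (if n = m₁ then coeff n R else 0) + (if n = m₂ then coeff n R else 0))
    (fun n _ => by
      show (if vT n = m' then coeff n R else 0) =
        (if n = m₁ then coeff n R else 0) + (if n = m₂ then coeff n R else 0)
      by_cases h : vT n = m'
      · rcases huniq n h with rfl | rfl
        · rw [if_pos h, if_pos rfl, if_neg hne, add_zero]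
        · rw [if_pos h, if_pos rfl, if_neg (fun e : n = m₁ => hne e.symm), zero_add]
      · rw [if_neg h, if_neg (fun e : n = m₁ => h (e ▸ h1)),
          if_neg (fun e : n = m₂ => h (e ▸ h2)), add_zero])]
  rw [Finset.sum_add_distrib, Finset.sum_ite_eq' R.support m₁ (fun n => coeff n R),
    Finset.sum_ite_eq' R.support m₂ (fun n => coeff n R)]
  have e1 : (if m₁ ∈ R.support then coeff m₁ R else 0) = coeff m₁ R := by
    split
    · rfl
    · exact (MvPolynomial.notMem_support_iff.mp ‹_›).symm
  have e2 : (if m₂ ∈ R.support then coeff m₂ R else 0) = coeff m₂ R := by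
    split
    · rfl
    · exact (MvPolynomial.notMem_support_iff.mp ‹_›).symm
  rw [e1, e2]

noncomputable def K1 : Quin := X 0 * X 2 - X 1 ^ 2
noncomputable def K2 : Quin := X 2 * X 4 - X 3 ^ 2
noncomputable def Bq : Quin := X 0 * X 4 - 2 * (X 1 * X 3) + X 2 ^ 2

lemma XX5 (i j : Fin 5) : (X i * X j : Quin) =
    monomial (Finsupp.single i 1 + Finsupp.single j 1) 1 := by
  rw [show (X i : Quin) = monomial (Finsupp.single i 1) 1 from rfl,
    show (X j : Quin) = monomial (Finsupp.single j 1) 1 from rfl, monomial_mul, one_mul]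

lemma K1_eq : K1 = monomial (E 1 0 1 0 0) 1 - monomial (E 0 2 0 0 0) 1 := by
  rw [K1, XX5, X_pow_eq_monomial,
    show (Finsupp.single (0 : Fin 5) 1 + Finsupp.single 2 1) = E 1 0 1 0 0 from
      E_ext (by simp) (by simp) (by simp) (by simp) (by simp),
    show (Finsupp.single (1 : Fin 5) 2) = E 0 2 0 0 0 from
      E_ext (by simp) (by simp) (by simp) (by simp) (by simp)]

lemma K2_eq : K2 = monomial (E 0 0 1 0 1) 1 - monomial (E 0 0 0 2 0) 1 := by
  rw [K2, XX5, X_pow_eq_monomial,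
    show (Finsupp.single (2 : Fin 5) 1 + Finsupp.single 4 1) = E 0 0 1 0 1 from
      E_ext (by simp) (by simp) (by simp) (by simp) (by simp),
    show (Finsupp.single (3 : Fin 5) 2) = E 0 0 0 2 0 from
      E_ext (by simp) (by simp) (by simp) (by simp) (by simp)]

lemma Bq_eq : Bq = monomial (E 1 0 0 0 1) 1 - monomial (E 0 1 0 1 0) 2
    + monomial (E 0 0 2 0 0) 1 := by
  rw [Bq, XX5, XX5, X_pow_eq_monomial,
    show (2 : Quin) = C 2 from by exact (map_ofNat C 2).symm,
    C_mul_monomial, mul_one,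
    show (Finsupp.single (0 : Fin 5) 1 + Finsupp.single 4 1) = E 1 0 0 0 1 from
      E_ext (by simp) (by simp) (by simp) (by simp) (by simp),
    show (Finsupp.single (1 : Fin 5) 1 + Finsupp.single 3 1) = E 0 1 0 1 0 from
      E_ext (by simp) (by simp) (by simp) (by simp) (by simp),
    show (Finsupp.single (2 : Fin 5) 2) = E 0 0 2 0 0 from
      E_ext (by simp) (by simp) (by simp) (by simp) (by simp)]


theorem classify5' (a b c d e : ℕ) (h : a + b + c + d + e = 2) :
        (a = 2 ∧ b = 0 ∧ c = 0 ∧ d = 0 ∧ e = 0) ∨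
        (a = 1 ∧ b = 1 ∧ c = 0 ∧ d = 0 ∧ e = 0) ∨
        (a = 1 ∧ b = 0 ∧ c = 1 ∧ d = 0 ∧ e = 0) ∨
        (a = 1 ∧ b = 0 ∧ c = 0 ∧ d = 1 ∧ e = 0) ∨
        (a = 1 ∧ b = 0 ∧ c = 0 ∧ d = 0 ∧ e = 1) ∨
        (a = 0 ∧ b = 2 ∧ c = 0 ∧ d = 0 ∧ e = 0) ∨
        (a = 0 ∧ b = 1 ∧ c = 1 ∧ d = 0 ∧ e = 0) ∨
        (a = 0 ∧ b = 1 ∧ c = 0 ∧ d = 1 ∧ e = 0) ∨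
        (a = 0 ∧ b = 1 ∧ c = 0 ∧ d = 0 ∧ e = 1) ∨
        (a = 0 ∧ b = 0 ∧ c = 2 ∧ d = 0 ∧ e = 0) ∨
        (a = 0 ∧ b = 0 ∧ c = 1 ∧ d = 1 ∧ e = 0) ∨
        (a = 0 ∧ b = 0 ∧ c = 1 ∧ d = 0 ∧ e = 1) ∨
        (a = 0 ∧ b = 0 ∧ c = 0 ∧ d = 2 ∧ e = 0) ∨
        (a = 0 ∧ b = 0 ∧ c = 0 ∧ d = 1 ∧ e = 1) ∨
        (a = 0 ∧ b = 0 ∧ c = 0 ∧ d = 0 ∧ e = 2) := by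
  by_cases ha2 : a = 2
  · exact Or.inl ⟨ha2, by omega, by omega, by omega, by omega⟩
  by_cases ha1 : a = 1
  · by_cases hb : b = 1
    · exact Or.inr (Or.inl ⟨ha1, hb, by omega, by omega, by omega⟩)
    by_cases hc : c = 1
    · exact Or.inr (Or.inr (Or.inl ⟨ha1, by omega, hc, by omega, by omega⟩))
    by_cases hd : d = 1
    · exact Or.inr (Or.inr (Or.inr (Or.inl ⟨ha1, by omega, by omega, hd, by omega⟩)))
    · exact Or.inr (Or.inr (Or.inr (Or.inr (Or.inl ⟨ha1, by omega, by omega, by omega, by omega⟩))))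
  · by_cases hb2 : b = 2
    · exact Or.inr (Or.inr (Or.inr (Or.inr (Or.inr (Or.inl ⟨by omega, hb2, by omega, by omega, by omega⟩)))))
    by_cases hb1 : b = 1
    · by_cases hc : c = 1
      · exact Or.inr (Or.inr (Or.inr (Or.inr (Or.inr (Or.inr (Or.inl ⟨by omega, hb1, hc, by omega, by omega⟩))))))
      by_cases hd : d = 1
      · exact Or.inr (Or.inr (Or.inr (Or.inr (Or.inr (Or.inr (Or.inr (Or.inl ⟨by omega, hb1, by omega, hd, by omega⟩)))))))
      · exact Or.inr (Or.inr (Or.inr (Or.inr (Or.inr (Or.inr (Or.inr (Or.inr (Or.inl ⟨by omega, hb1, by omega, by omega, by omega⟩))))))))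
    by_cases hc2 : c = 2
    · exact Or.inr (Or.inr (Or.inr (Or.inr (Or.inr (Or.inr (Or.inr (Or.inr (Or.inr (Or.inl ⟨by omega, by omega, hc2, by omega, by omega⟩)))))))))
    by_cases hc1 : c = 1
    · by_cases hd : d = 1
      · exact Or.inr (Or.inr (Or.inr (Or.inr (Or.inr (Or.inr (Or.inr (Or.inr (Or.inr (Or.inr (Or.inl ⟨by omega, by omega, hc1, hd, by omega⟩))))))))))
      · exact Or.inr (Or.inr (Or.inr (Or.inr (Or.inr (Or.inr (Or.inr (Or.inr (Or.inr (Or.inr (Or.inr (Or.inl ⟨by omega, by omega, hc1, by omega, by omega⟩)))))))))))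
    by_cases hd2 : d = 2
    · exact Or.inr (Or.inr (Or.inr (Or.inr (Or.inr (Or.inr (Or.inr (Or.inr (Or.inr (Or.inr (Or.inr (Or.inr (Or.inl ⟨by omega, by omega, by omega, hd2, by omega⟩))))))))))))
    by_cases hd1 : d = 1
    · exact Or.inr (Or.inr (Or.inr (Or.inr (Or.inr (Or.inr (Or.inr (Or.inr (Or.inr (Or.inr (Or.inr (Or.inr (Or.inr (Or.inl ⟨by omega, by omega, by omega, hd1, by omega⟩)))))))))))))
    · exact Or.inr (Or.inr (Or.inr (Or.inr (Or.inr (Or.inr (Or.inr (Or.inr (Or.inr (Or.inr (Or.inr (Or.inr (Or.inr (Or.inr ⟨by omega, by omega, by omega, by omega, by omega⟩)))))))))))))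

set_option maxHeartbeats 2000000 in
lemma kernel_lemma {R : Quin} (hR : R.IsHomogeneous 2) (h0 : veroneseSubst R = 0) :
    R = coeff (E 1 0 1 0 0) R • K1 + coeff (E 0 0 1 0 1) R • K2 := by
  have key : ∀ m' : Fin 3 →₀ ℕ,
      (∑ n ∈ R.support, if vT n = m' then coeff n R else 0) = 0 := fun m' => by
    rw [← coeff_veroneseSubst, h0, coeff_zero]
  have hu1 : coeff (E 2 0 0 0 0) R = 0 := by
    rw [← sum_unique R (m' := E3 4 0 0) (by simp [vT, E_apply]) (fun n h => by
      rw [vT, E3_eq_iff] at h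
      exact E_ext (by omega) (by omega) (by omega) (by omega) (by omega))]
    exact key _
  have hu2 : coeff (E 1 1 0 0 0) R = 0 := by
    rw [← sum_unique R (m' := E3 3 1 0) (by simp [vT, E_apply]) (fun n h => by
      rw [vT, E3_eq_iff] at h
      exact E_ext (by omega) (by omega) (by omega) (by omega) (by omega))]
    exact key _
  have hu3 : coeff (E 1 0 0 1 0) R = 0 := by
    rw [← sum_unique R (m' := E3 2 1 1) (by simp [vT, E_apply]) (fun n h => by
      rw [vT, E3_eq_iff] at h
      exact E_ext (by omega) (by omega) (by omega) (by omega) (by omega))]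
    exact key _
  have hu4 : coeff (E 1 0 0 0 1) R = 0 := by
    rw [← sum_unique R (m' := E3 2 0 2) (by simp [vT, E_apply]) (fun n h => by
      rw [vT, E3_eq_iff] at h
      exact E_ext (by omega) (by omega) (by omega) (by omega) (by omega))]
    exact key _
  have hu5 : coeff (E 0 1 1 0 0) R = 0 := by
    rw [← sum_unique R (m' := E3 1 3 0) (by simp [vT, E_apply]) (fun n h => by
      rw [vT, E3_eq_iff] at h
      exact E_ext (by omega) (by omega) (by omega) (by omega) (by omega))]
    exact key _
  have hu6 : coeff (E 0 1 0 1 0) R = 0 := by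
    rw [← sum_unique R (m' := E3 1 2 1) (by simp [vT, E_apply]) (fun n h => by
      rw [vT, E3_eq_iff] at h
      exact E_ext (by omega) (by omega) (by omega) (by omega) (by omega))]
    exact key _
  have hu7 : coeff (E 0 1 0 0 1) R = 0 := by
    rw [← sum_unique R (m' := E3 1 1 2) (by simp [vT, E_apply]) (fun n h => by
      rw [vT, E3_eq_iff] at h
      exact E_ext (by omega) (by omega) (by omega) (by omega) (by omega))]
    exact key _
  have hu8 : coeff (E 0 0 2 0 0) R = 0 := by
    rw [← sum_unique R (m' := E3 0 4 0) (by simp [vT, E_apply]) (fun n h => by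
      rw [vT, E3_eq_iff] at h
      exact E_ext (by omega) (by omega) (by omega) (by omega) (by omega))]
    exact key _
  have hu9 : coeff (E 0 0 1 1 0) R = 0 := by
    rw [← sum_unique R (m' := E3 0 3 1) (by simp [vT, E_apply]) (fun n h => by
      rw [vT, E3_eq_iff] at h
      exact E_ext (by omega) (by omega) (by omega) (by omega) (by omega))]
    exact key _
  have hu10 : coeff (E 0 0 0 1 1) R = 0 := by
    rw [← sum_unique R (m' := E3 0 1 3) (by simp [vT, E_apply]) (fun n h => by
      rw [vT, E3_eq_iff] at h
      exact E_ext (by omega) (by omega) (by omega) (by omega) (by omega))]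
    exact key _
  have hu11 : coeff (E 0 0 0 0 2) R = 0 := by
    rw [← sum_unique R (m' := E3 0 0 4) (by simp [vT, E_apply]) (fun n h => by
      rw [vT, E3_eq_iff] at h
      exact E_ext (by omega) (by omega) (by omega) (by omega) (by omega))]
    exact key _
  have hp1 : coeff (E 0 2 0 0 0) R = - coeff (E 1 0 1 0 0) R := by
    have hk := key (E3 2 2 0)
    rw [sum_pair R (m₁ := E 1 0 1 0 0) (m₂ := E 0 2 0 0 0) (by simp [vT, E_apply])
      (by simp [vT, E_apply]) (by simp [E_eq_iff]) (fun n h => by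
        rw [vT, E3_eq_iff] at h
        obtain ⟨h1, h2, h3⟩ := h
        rcases (by omega : (n 0 = 1 ∧ n 1 = 0 ∧ n 2 = 1 ∧ n 3 = 0 ∧ n 4 = 0) ∨
            (n 0 = 0 ∧ n 1 = 2 ∧ n 2 = 0 ∧ n 3 = 0 ∧ n 4 = 0)) with ⟨e0,e1,e2,e3,e4⟩|⟨e0,e1,e2,e3,e4⟩
        · exact Or.inl (E_ext e0 e1 e2 e3 e4)
        · exact Or.inr (E_ext e0 e1 e2 e3 e4))] at hk
    linear_combination hk
  have hp2 : coeff (E 0 0 0 2 0) R = - coeff (E 0 0 1 0 1) R := by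
    have hk := key (E3 0 2 2)
    rw [sum_pair R (m₁ := E 0 0 1 0 1) (m₂ := E 0 0 0 2 0) (by simp [vT, E_apply])
      (by simp [vT, E_apply]) (by simp [E_eq_iff]) (fun n h => by
        rw [vT, E3_eq_iff] at h
        obtain ⟨h1, h2, h3⟩ := h
        rcases (by omega : (n 0 = 0 ∧ n 1 = 0 ∧ n 2 = 1 ∧ n 3 = 0 ∧ n 4 = 1) ∨
            (n 0 = 0 ∧ n 1 = 0 ∧ n 2 = 0 ∧ n 3 = 2 ∧ n 4 = 0)) with ⟨e0,e1,e2,e3,e4⟩|⟨e0,e1,e2,e3,e4⟩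
        · exact Or.inl (E_ext e0 e1 e2 e3 e4)
        · exact Or.inr (E_ext e0 e1 e2 e3 e4))] at hk
    linear_combination hk
  apply MvPolynomial.ext
  intro m
  by_cases hdeg : m 0 + m 1 + m 2 + m 3 + m 4 = 2
  · rcases classify5' (m 0) (m 1) (m 2) (m 3) (m 4) hdeg with
      ⟨e0,e1,e2,e3,e4⟩|⟨e0,e1,e2,e3,e4⟩|⟨e0,e1,e2,e3,e4⟩|⟨e0,e1,e2,e3,e4⟩|⟨e0,e1,e2,e3,e4⟩|
      ⟨e0,e1,e2,e3,e4⟩|⟨e0,e1,e2,e3,e4⟩|⟨e0,e1,e2,e3,e4⟩|⟨e0,e1,e2,e3,e4⟩|⟨e0,e1,e2,e3,e4⟩|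
      ⟨e0,e1,e2,e3,e4⟩|⟨e0,e1,e2,e3,e4⟩|⟨e0,e1,e2,e3,e4⟩|⟨e0,e1,e2,e3,e4⟩|⟨e0,e1,e2,e3,e4⟩ <;>
      rw [E_ext e0 e1 e2 e3 e4] <;>
      simp [K1_eq, K2_eq, coeff_smul, coeff_sub, coeff_add, coeff_monomial, E_eq_iff,
        hu1, hu2, hu3, hu4, hu5, hu6, hu7, hu8, hu9, hu10, hu11, hp1, hp2]
  · have hL : coeff m R = 0 := hR.coeff_eq_zero (by rw [degree_five]; exact hdeg)
    have hne : ∀ (a b c d e : ℕ), a + b + c + d + e = 2 → ¬(E a b c d e = m) := by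
      intro a b c d e hs h
      apply hdeg
      rw [← h]
      simpa [E_apply] using hs
    rw [hL, coeff_add, coeff_smul, coeff_smul, K1_eq, K2_eq, coeff_sub, coeff_sub,
      coeff_monomial, coeff_monomial, coeff_monomial, coeff_monomial,
      if_neg (hne 1 0 1 0 0 (by norm_num)), if_neg (hne 0 2 0 0 0 (by norm_num)),
      if_neg (hne 0 0 1 0 1 (by norm_num)), if_neg (hne 0 0 0 2 0 (by norm_num))]
    simp

lemma degree_three (m : Fin 3 →₀ ℕ) : m.degree = m 0 + m 1 + m 2 := by
  rw [Finsupp.degree_apply, Finset.sum_subset (Finset.subset_univ _)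
    (by intro i _ hi; exact Finsupp.notMem_support_iff.mp hi), Fin.sum_univ_three]

lemma decomp3 {f : MvPolynomial (Fin 3) ℂ} (hf : f.IsHomogeneous 2) :
    f = monomial (E3 2 0 0) (coeff (E3 2 0 0) f) + monomial (E3 1 1 0) (coeff (E3 1 1 0) f) +
        monomial (E3 0 2 0) (coeff (E3 0 2 0) f) + monomial (E3 0 1 1) (coeff (E3 0 1 1) f) +
        monomial (E3 0 0 2) (coeff (E3 0 0 2) f) + monomial (E3 1 0 1) (coeff (E3 1 0 1) f) := by
  apply MvPolynomial.ext; intro m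
  by_cases hdeg : m 0 + m 1 + m 2 = 2
  · rcases (by omega :
        (m 0 = 2 ∧ m 1 = 0 ∧ m 2 = 0) ∨ (m 0 = 1 ∧ m 1 = 1 ∧ m 2 = 0) ∨
        (m 0 = 0 ∧ m 1 = 2 ∧ m 2 = 0) ∨ (m 0 = 0 ∧ m 1 = 1 ∧ m 2 = 1) ∨
        (m 0 = 0 ∧ m 1 = 0 ∧ m 2 = 2) ∨ (m 0 = 1 ∧ m 1 = 0 ∧ m 2 = 1)) with
      ⟨e0,e1,e2⟩|⟨e0,e1,e2⟩|⟨e0,e1,e2⟩|⟨e0,e1,e2⟩|⟨e0,e1,e2⟩|⟨e0,e1,e2⟩ <;>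
    rw [E3_ext e0 e1 e2] <;>
    simp [coeff_monomial, coeff_add, E3_eq_iff]
  · have hne : ∀ (a b c : ℕ), a + b + c = 2 → ¬(E3 a b c = m) := by
      intro a b c hs h
      apply hdeg
      rw [← h]
      simpa [E3_apply] using hs
    rw [hf.coeff_eq_zero (by rw [degree_three]; exact hdeg), coeff_add, coeff_add, coeff_add,
      coeff_add, coeff_add, coeff_monomial, coeff_monomial, coeff_monomial, coeff_monomial,
      coeff_monomial, coeff_monomial, if_neg (hne 2 0 0 (by norm_num)),
      if_neg (hne 1 1 0 (by norm_num)), if_neg (hne 0 2 0 (by norm_num)),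
      if_neg (hne 0 1 1 (by norm_num)), if_neg (hne 0 0 2 (by norm_num)),
      if_neg (hne 1 0 1 (by norm_num))]
    simp

lemma mE3 (a b c : ℕ) (r : ℂ) :
    monomial (E3 a b c) r = C r * (X 0 ^ a * X 1 ^ b * X 2 ^ c) := by
  rw [monomial_eq, Finsupp.prod_fintype _ _ (fun i => pow_zero _), Fin.prod_univ_three]
  simp only [E3_apply, Matrix.cons_val_zero, Matrix.cons_val_one, Matrix.head_cons,
    Matrix.cons_val_two, Matrix.tail_cons]

lemma mE5 (a b c d e : ℕ) (r : ℂ) :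
    monomial (E a b c d e) r = C r * (X 0 ^ a * X 1 ^ b * X 2 ^ c * X 3 ^ d * X 4 ^ e) := by
  rw [monomial_eq, Finsupp.prod_fintype _ _ (fun i => pow_zero _), Fin.prod_univ_five]
  simp only [E_apply, Matrix.cons_val_zero, Matrix.cons_val_one, Matrix.head_cons,
    Matrix.cons_val_two, Matrix.cons_val_three, Matrix.cons_val_four, Matrix.tail_cons]

noncomputable def sigma' : MvPolynomial (Fin 3) ℂ →ₐ[ℂ] MvPolynomial (Fin 3) ℂ :=
  aeval ![-X 0, 0, X 2]

noncomputable def tau' : MvPolynomial (Fin 3) ℂ →ₐ[ℂ] MvPolynomial (Fin 3) ℂ :=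
  aeval ![X 0, 0, X 2]

lemma sigma_tau_veronese : sigma'.comp veroneseSubst = tau'.comp veroneseSubst := by
  apply MvPolynomial.algHom_ext
  intro i
  fin_cases i <;> simp [sigma', tau', veroneseSubst]

noncomputable def Q0 (β γ δ ζ : ℂ) : Quin :=
  monomial (E 1 0 0 0 1) (ζ^2) + monomial (E 0 2 0 0 0) (β^2) + monomial (E 0 0 2 0 0) (γ^2) +
  monomial (E 0 0 0 2 0) (δ^2) + monomial (E 0 1 1 0 0) (2*β*γ) +
  monomial (E 0 1 0 1 0) (2*(β*δ+γ*ζ)) + monomial (E 1 0 0 1 0) (2*β*ζ) +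
  monomial (E 0 0 1 1 0) (2*γ*δ) + monomial (E 0 1 0 0 1) (2*δ*ζ)

lemma degE (a b c d e : ℕ) : (E a b c d e).degree = a + b + c + d + e := by
  rw [degree_five]; simp [E_apply]

lemma Q0_isHomogeneous (β γ δ ζ : ℂ) : (Q0 β γ δ ζ).IsHomogeneous 2 := by
  repeat' apply MvPolynomial.IsHomogeneous.add
  all_goals exact isHomogeneous_monomial _ (by rw [degE])

lemma vsQ0 (β γ δ ζ : ℂ) :
    veroneseSubst (Q0 β γ δ ζ) =
      (C β * (X 0 * X 1) + C γ * X 1^2 + C δ * (X 1 * X 2) + C ζ * (X 0 * X 2))^2 := by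
  rw [Q0]
  simp only [map_add, veroneseSubst_monomial, vT, E_apply, Matrix.cons_val_zero,
    Matrix.cons_val_one, Matrix.head_cons, Matrix.cons_val_two, Matrix.cons_val_three,
    Matrix.cons_val_four, Matrix.tail_cons, mE3, map_mul, map_ofNat]
  norm_num
  ring


noncomputable def M5 (β γ δ ζ : ℂ) : Matrix (Fin 5) (Fin 5) ℂ :=
  !![(β*δ-γ*ζ)^2, -2*(β*δ-γ*ζ)*δ, δ^2, 0, 0;
     0, (β*δ-γ*ζ)*ζ, -δ*ζ, 0, 0;
     0, 0, ζ^2, 0, 0;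
     0, 0, -β*ζ, ζ, 0;
     0, 0, β^2, -2*β, 1]

lemma substMap_aeval (g : Matrix (Fin 5) (Fin 5) ℂ) (p : Quin) :
    substMap g p = MvPolynomial.aeval (fun i => ∑ j, C (g i j) * X j) p := rfl

set_option maxHeartbeats 4000000 in
lemma detM5 (β γ δ ζ : ℂ) : (M5 β γ δ ζ).det = (β*δ-γ*ζ)^3 * ζ^4 := by
  simp [M5, Matrix.det_succ_row_zero, Fin.sum_univ_succ]
  ring

set_option maxHeartbeats 4000000 in
lemma substMap_M5_K1 (β γ δ ζ : ℂ) :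
    substMap (M5 β γ δ ζ) K1 = ((β*δ-γ*ζ)^2 * ζ^2) • K1 := by
  rw [substMap_aeval, K1, smul_eq_C_mul]
  simp only [map_sub, map_mul, map_pow, aeval_X, M5, Fin.sum_univ_five, Matrix.cons_val',
    Matrix.cons_val_zero, Matrix.cons_val_one, Matrix.head_cons, Matrix.empty_val',
    Matrix.cons_val_fin_one, Matrix.head_fin_const, Matrix.cons_val_two, Matrix.cons_val_three,
    Matrix.cons_val_four, Matrix.tail_cons, Matrix.of_apply, map_ofNat, map_neg, map_one, map_zero,
    K1]
  ring

set_option maxHeartbeats 4000000 in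
lemma substMap_M5_K2 (β γ δ ζ : ℂ) :
    substMap (M5 β γ δ ζ) K2 = (ζ^2) • K2 := by
  rw [substMap_aeval, K2, smul_eq_C_mul]
  simp only [map_sub, map_mul, map_pow, aeval_X, M5, Fin.sum_univ_five, Matrix.cons_val',
    Matrix.cons_val_zero, Matrix.cons_val_one, Matrix.head_cons, Matrix.empty_val',
    Matrix.cons_val_fin_one, Matrix.head_fin_const, Matrix.cons_val_two, Matrix.cons_val_three,
    Matrix.cons_val_four, Matrix.tail_cons, Matrix.of_apply, map_ofNat, map_neg, map_one, map_zero,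
    K2]
  ring

set_option maxHeartbeats 4000000 in
lemma substMap_M5_Q0 (β γ δ ζ : ℂ) :
    substMap (M5 β γ δ ζ) (Q0 β γ δ ζ) =
      (ζ^2 * (β*δ-γ*ζ)^2) • Bq + (-(β^2 * ζ^2 * (β*δ-γ*ζ)^2)) • K1 + (-(δ^2 * ζ^2)) • K2 := by
  rw [substMap_aeval, Q0, smul_eq_C_mul, smul_eq_C_mul, smul_eq_C_mul]
  simp only [mE5, map_add, map_sub, map_mul, map_pow, aeval_X, aeval_C, M5, Fin.sum_univ_five,
    Matrix.cons_val', Matrix.cons_val_zero, Matrix.cons_val_one, Matrix.head_cons,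
    Matrix.empty_val', Matrix.cons_val_fin_one, Matrix.head_fin_const, Matrix.cons_val_two,
    Matrix.cons_val_three, Matrix.cons_val_four, Matrix.tail_cons, Matrix.of_apply, map_ofNat,
    map_neg, map_one, map_zero, K1, K2, Bq, pow_one, pow_zero, algebraMap_eq]
  ring


set_option maxHeartbeats 2000000 in
/-- A quadric cutting out the double of an irreducible conic on the
Veronese quartic surface either cuts a double hyperplane section (the conic `f` has no
`xz` term), or the resulting net is projectively equivalent to the balanced ribbon. -/
theorem double_conic_on_veronese (f : MvPolynomial (Fin 3) ℂ)
    (hf : f.IsHomogeneous 2) (hirr : Irreducible f)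
    (Q : Quin) (hQ : Q.IsHomogeneous 2)
    (hcomp : veroneseSubst Q = f ^ 2) :
    MvPolynomial.coeff (Finsupp.single 0 1 + Finsupp.single 2 1) f = 0 ∨
    ∃ g : Matrix.GeneralLinearGroup (Fin 5) ℂ,
      Submodule.map (substMap (g : Matrix (Fin 5) (Fin 5) ℂ))
          (Submodule.span ℂ
            {(MvPolynomial.X 0 * MvPolynomial.X 2 - MvPolynomial.X 1 ^ 2 : Quin),
             MvPolynomial.X 2 * MvPolynomial.X 4 - MvPolynomial.X 3 ^ 2, Q}) =
        Submodule.span ℂ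
          {(MvPolynomial.X 0 * MvPolynomial.X 2 - MvPolynomial.X 1 ^ 2 : Quin),
           MvPolynomial.X 2 * MvPolynomial.X 4 - MvPolynomial.X 3 ^ 2,
           MvPolynomial.X 0 * MvPolynomial.X 4 -
             2 * (MvPolynomial.X 1 * MvPolynomial.X 3) + MvPolynomial.X 2 ^ 2} := by
  have hmon : (Finsupp.single 0 1 + Finsupp.single 2 1 : Fin 3 →₀ ℕ) = E3 1 0 1 := by
    simp [E3]
  by_cases hz : coeff (E3 1 0 1) f = 0
  · left; rw [hmon]; exact hz
  right
  have hdec := decomp3 hf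
  set α := coeff (E3 2 0 0) f with hαdef
  set β := coeff (E3 1 1 0) f with hβdef
  set γ := coeff (E3 0 2 0) f with hγdef
  set δ := coeff (E3 0 1 1) f with hδdef
  set ε := coeff (E3 0 0 2) f with hεdef
  set ζ := coeff (E3 1 0 1) f with hζdef
  have hst : sigma' (veroneseSubst Q) = tau' (veroneseSubst Q) := by
    have h := AlgHom.congr_fun sigma_tau_veronese Q
    simpa using h
  rw [hcomp] at hst
  have hσ : sigma' f = C α * X 0 ^ 2 + C ε * X 2 ^ 2 - C ζ * (X 0 * X 2) := by
    rw [hdec]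
    simp only [mE3, map_add, map_sub, map_mul, map_pow, sigma', aeval_X, aeval_C,
      algebraMap_eq, Matrix.cons_val_zero, Matrix.cons_val_one, Matrix.head_cons,
      Matrix.cons_val_two, Matrix.tail_cons]
    ring
  have hτ : tau' f = C α * X 0 ^ 2 + C ε * X 2 ^ 2 + C ζ * (X 0 * X 2) := by
    rw [hdec]
    simp only [mE3, map_add, map_sub, map_mul, map_pow, tau', aeval_X, aeval_C,
      algebraMap_eq, Matrix.cons_val_zero, Matrix.cons_val_one, Matrix.head_cons,
      Matrix.cons_val_two, Matrix.tail_cons]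
    ring
  have hfac : (sigma' f - tau' f) * (sigma' f + tau' f) = 0 := by
    rw [map_pow, map_pow] at hst
    linear_combination hst
  have hαε : α = 0 ∧ ε = 0 := by
    rcases mul_eq_zero.mp hfac with hcase | hcase
    · exfalso
      rw [hσ, hτ] at hcase
      have h2 : monomial (E3 1 0 1) (-(2*ζ)) = 0 := by
        rw [mE3, map_neg, map_mul, map_ofNat]
        linear_combination hcase
      have h3 := congrArg (coeff (E3 1 0 1)) h2
      simp [coeff_monomial] at h3
      exact hz h3
    · rw [hσ, hτ] at hcase
      have h2 : monomial (E3 2 0 0) (2*α) + monomial (E3 0 0 2) (2*ε) = 0 := by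
        rw [mE3, mE3, map_mul, map_mul, map_ofNat]
        linear_combination hcase
      constructor
      · have h3 := congrArg (coeff (E3 2 0 0)) h2
        simp [coeff_add, coeff_monomial, E3_eq_iff] at h3
        exact h3
      · have h3 := congrArg (coeff (E3 0 0 2)) h2
        simp [coeff_add, coeff_monomial, E3_eq_iff] at h3
        exact h3
  obtain ⟨hα0, hε0⟩ := hαε
  have hf4 : f = C β * (X 0 * X 1) + C γ * X 1 ^ 2 + C δ * (X 1 * X 2) + C ζ * (X 0 * X 2) := by
    rw [hdec, hα0, hε0]
    simp only [monomial_zero, zero_add, add_zero, mE3]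
    ring
  have hk : β * δ - γ * ζ ≠ 0 := by
    intro hk0
    have hγval : γ = β * δ * ζ⁻¹ := by
      field_simp
      linear_combination -hk0
    have hone : (C (δ*ζ⁻¹) : MvPolynomial (Fin 3) ℂ) * C ζ = C δ := by
      rw [← map_mul]
      congr 1
      field_simp
    have hfact : f = (X 0 + C (δ*ζ⁻¹) * X 1) * (C β * X 1 + C ζ * X 2) := by
      rw [hf4, hγval]
      have hcc : (C (β*δ*ζ⁻¹) : MvPolynomial (Fin 3) ℂ) = C (δ*ζ⁻¹) * C β := by
        rw [← map_mul]
        congr 1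
        ring
      rw [hcc]
      linear_combination (-(X 1 * X 2) : MvPolynomial (Fin 3) ℂ) * hone
    rcases hirr.isUnit_or_isUnit hfact with hu | hu
    · have h0 : eval ![-(δ*ζ⁻¹), 1, 0] (X 0 + C (δ*ζ⁻¹) * X 1 : MvPolynomial (Fin 3) ℂ) = 0 := by
        simp
      have h1 := hu.map (eval ![-(δ*ζ⁻¹), 1, 0])
      rw [h0] at h1
      exact not_isUnit_zero h1
    · have h0 : eval ![0, 0, 0] (C β * X 1 + C ζ * X 2 : MvPolynomial (Fin 3) ℂ) = 0 := by
        simp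
      have h1 := hu.map (eval ![0, 0, 0])
      rw [h0] at h1
      exact not_isUnit_zero h1
  have hvs : veroneseSubst (Q - Q0 β γ δ ζ) = 0 := by
    rw [map_sub, hcomp, vsQ0, ← hf4, sub_self]
  have hker := kernel_lemma (hQ.sub (Q0_isHomogeneous β γ δ ζ)) hvs
  set lam := coeff (E 1 0 1 0 0) (Q - Q0 β γ δ ζ) with hlam
  set mu := coeff (E 0 0 1 0 1) (Q - Q0 β γ δ ζ) with hmu
  have hQeq : Q = Q0 β γ δ ζ + (lam • K1 + mu • K2) := by
    rw [← hker]; ring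
  have hQ0eq : Q0 β γ δ ζ = Q - (lam • K1 + mu • K2) := by
    rw [← hker]; ring
  have hknz : (β*δ-γ*ζ)^2 * ζ^2 ≠ 0 :=
    mul_ne_zero (pow_ne_zero _ hk) (pow_ne_zero _ hz)
  have hznz : (ζ:ℂ)^2 ≠ 0 := pow_ne_zero _ hz
  have hcnz : ζ^2 * (β*δ-γ*ζ)^2 ≠ 0 :=
    mul_ne_zero (pow_ne_zero _ hz) (pow_ne_zero _ hk)
  refine ⟨Matrix.GeneralLinearGroup.mkOfDetNeZero (M5 β γ δ ζ)
    (by rw [detM5]; exact mul_ne_zero (pow_ne_zero _ hk) (pow_ne_zero _ hz)), ?_⟩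
  show Submodule.map (substMap (M5 β γ δ ζ)) (Submodule.span ℂ {K1, K2, Q}) =
    Submodule.span ℂ {K1, K2, Bq}
  have hspan1 : Submodule.span ℂ ({K1, K2, Q} : Set Quin) =
      Submodule.span ℂ {K1, K2, Q0 β γ δ ζ} := by
    apply Submodule.span_eq_span
    · intro x hx
      simp only [Set.mem_insert_iff, Set.mem_singleton_iff] at hx
      rcases hx with rfl | rfl | rfl
      · exact Submodule.subset_span (by simp)
      · exact Submodule.subset_span (by simp)
      · rw [hQeq]
        exact SetLike.mem_coe.mpr (add_mem (Submodule.subset_span (by simp))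
          (add_mem (Submodule.smul_mem _ _ (Submodule.subset_span (by simp)))
            (Submodule.smul_mem _ _ (Submodule.subset_span (by simp)))))
    · intro x hx
      simp only [Set.mem_insert_iff, Set.mem_singleton_iff] at hx
      rcases hx with rfl | rfl | rfl
      · exact Submodule.subset_span (by simp)
      · exact Submodule.subset_span (by simp)
      · rw [hQ0eq]
        exact SetLike.mem_coe.mpr (sub_mem (Submodule.subset_span (by simp))
          (add_mem (Submodule.smul_mem _ _ (Submodule.subset_span (by simp)))
            (Submodule.smul_mem _ _ (Submodule.subset_span (by simp)))))
  rw [hspan1, Submodule.map_span, Set.image_insert_eq, Set.image_insert_eq,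
    Set.image_singleton, substMap_M5_K1, substMap_M5_K2, substMap_M5_Q0]
  set c1 : ℂ := (β*δ-γ*ζ)^2 * ζ^2 with hc1
  set c2 : ℂ := ζ^2 with hc2
  set c3 : ℂ := ζ^2 * (β*δ-γ*ζ)^2 with hc3
  set a1 : ℂ := β^2 * ζ^2 * (β*δ-γ*ζ)^2 with ha1
  set a2 : ℂ := δ^2 * ζ^2 with ha2
  set S : Set Quin := {c1 • K1, c2 • K2, c3 • Bq + (-a1) • K1 + (-a2) • K2} with hS
  have hK1mem : K1 ∈ Submodule.span ℂ S := by
    have h := Submodule.smul_mem (Submodule.span ℂ S) c1⁻¹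
      (Submodule.subset_span (show c1 • K1 ∈ S by simp [hS]))
    rwa [inv_smul_smul₀ hknz] at h
  have hK2mem : K2 ∈ Submodule.span ℂ S := by
    have h := Submodule.smul_mem (Submodule.span ℂ S) c2⁻¹
      (Submodule.subset_span (show c2 • K2 ∈ S by simp [hS]))
    rwa [inv_smul_smul₀ hznz] at h
  have hBqmem : Bq ∈ Submodule.span ℂ S := by
    have h3 : c3 • Bq + (-a1) • K1 + (-a2) • K2 ∈ Submodule.span ℂ S :=
      Submodule.subset_span (by simp [hS])
    have h4 := add_mem (add_mem h3 (Submodule.smul_mem _ a1 hK1mem))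
      (Submodule.smul_mem _ a2 hK2mem)
    rw [show c3 • Bq + (-a1) • K1 + (-a2) • K2 + a1 • K1 + a2 • K2 = c3 • Bq from by
      module] at h4
    have h5 := Submodule.smul_mem (Submodule.span ℂ S) c3⁻¹ h4
    rwa [inv_smul_smul₀ hcnz] at h5
  apply Submodule.span_eq_span
  · intro x hx
    simp only [hS, Set.mem_insert_iff, Set.mem_singleton_iff] at hx
    rcases hx with rfl | rfl | rfl
    · exact SetLike.mem_coe.mpr
        (Submodule.smul_mem _ _ (Submodule.subset_span (by simp)))
    · exact SetLike.mem_coe.mpr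
        (Submodule.smul_mem _ _ (Submodule.subset_span (by simp)))
    · exact SetLike.mem_coe.mpr (add_mem (add_mem
        (Submodule.smul_mem _ _ (Submodule.subset_span (by simp)))
        (Submodule.smul_mem _ _ (Submodule.subset_span (by simp))))
        (Submodule.smul_mem _ _ (Submodule.subset_span (by simp))))
  · intro x hx
    simp only [Set.mem_insert_iff, Set.mem_singleton_iff] at hx
    rcases hx with rfl | rfl | rfl
    · exact hK1mem
    · exact hK2mem
    · exact hBqmem
end
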